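/- arXiv:2202.08780 — 8 statements merged into one kernel-verified Lean document; each statement's English description precedes it below -/
import Mathlib

section
/- Let f : ℝ → ℝ be a nonnegative measurable probability density (∫ f = 1) with cumulative distribution function F(v) = ∫_{-∞}^{v} f. Let g : ℝ → ℝ be non-increasing with g·f integrable, and let t ∈ ℝ be a sign-change point of g, i.e. g(v) ≥ 0 for all v < t and g(v) ≤ 0 for all v > t. Let c ∈ [0,1] and let q ∈ ℝ satisfy F(q) = c. Define v⋆ = max(q, t) and h⋆(v) = 1{v ≤ v⋆}. Then (i) ∫ h⋆(v) f(v) dv ≥ c, and (ii) for every measurable h : ℝ → [0,1] with ∫ h(v) f(v) dv ≥ c one has ∫ h(v) g(v) f(v) dv ≤ ∫ h⋆(v) g(v) f(v) dv. -/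
open MeasureTheory Set

lemma aux_mul_nonneg_of_nonpos_nonpos {a b : ℝ} (ha : a ≤ 0) (hb : b ≤ 0) : 0 ≤ a * b := by nlinarith

/-- Variational lemma: among `[0,1]`-valued weight functions `h` whose `f`-average is
at least `c`, the down-set indicator `1{v ≤ max q t}` maximizes `∫ h g f` when `g` is
non-increasing with sign change at `t` and `F q = c`. -/
theorem stmt_0
    (f g : ℝ → ℝ) (hf_meas : Measurable f) (hf_nonneg : ∀ v, 0 ≤ f v)
    (hf_prob : ∫ v, f v = 1)
    (hg_anti : Antitone g) (hgf_int : Integrable (fun v => g v * f v))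
    (t : ℝ) (hg_pos : ∀ v < t, 0 ≤ g v) (hg_neg : ∀ v > t, g v ≤ 0)
    (c : ℝ) (hc : c ∈ Icc (0:ℝ) 1)
    (q : ℝ) (hq : ∫ v in Iic q, f v = c) :
    (c ≤ ∫ v, (if v ≤ max q t then (1:ℝ) else 0) * f v) ∧
    ∀ h : ℝ → ℝ, Measurable h → (∀ v, h v ∈ Icc (0:ℝ) 1) →
      c ≤ ∫ v, h v * f v →
      ∫ v, h v * g v * f v ≤ ∫ v, (if v ≤ max q t then (1:ℝ) else 0) * g v * f v := by
  have hf_int : Integrable f := by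
    by_contra hni
    rw [integral_undef hni] at hf_prob
    norm_num at hf_prob
  have hg_meas : Measurable g := hg_anti.measurable
  set V := max q t with hV
  -- helper: if h is measurable with values in [0,1] and w is integrable, h*w is integrable
  have key_int : ∀ (h w : ℝ → ℝ), Measurable h → (∀ v, h v ∈ Icc (0:ℝ) 1) →
      Measurable w → Integrable w → Integrable (fun v => h v * w v) := by
    intro h w hm hr hwm hwi
    refine hwi.mono ((hm.mul hwm)).aestronglyMeasurable ?_
    filter_upwards with v
    simp only [Real.norm_eq_abs, abs_mul]
    have h1 : |h v| ≤ 1 := abs_le.2 ⟨by linarith [(hr v).1], (hr v).2⟩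
    exact mul_le_of_le_one_left (abs_nonneg _) h1
  have hs_meas : Measurable (fun v => if v ≤ V then (1:ℝ) else 0) :=
    Measurable.ite measurableSet_Iic measurable_const measurable_const
  have hs_range : ∀ v, (if v ≤ V then (1:ℝ) else 0) ∈ Icc (0:ℝ) 1 := by
    intro v; split_ifs <;> norm_num
  -- indicator form
  have hind : (fun v => (if v ≤ V then (1:ℝ) else 0) * f v) = Set.indicator (Iic V) f := by
    funext v
    by_cases hv : v ≤ V <;> simp [Set.indicator, hv, Set.mem_Iic]
  have hsf_eq : ∫ v, (if v ≤ V then (1:ℝ) else 0) * f v = ∫ v in Iic V, f v := by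
    rw [hind, integral_indicator measurableSet_Iic]
  have part1 : c ≤ ∫ v, (if v ≤ V then (1:ℝ) else 0) * f v := by
    rw [hsf_eq, ← hq]
    exact setIntegral_mono_set hf_int.integrableOn (Filter.Eventually.of_forall hf_nonneg)
      (HasSubset.Subset.eventuallyLE (Iic_subset_Iic.2 (le_max_left q t)))
  refine ⟨part1, ?_⟩
  intro h hmeas hrange hch
  -- integrability facts
  have hint_hgf : Integrable (fun v => h v * g v * f v) := by
    simp_rw [mul_assoc]
    exact key_int h _ hmeas hrange (hg_meas.mul hf_meas) hgf_int
  have hint_sgf : Integrable (fun v => (if v ≤ V then (1:ℝ) else 0) * g v * f v) := by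
    simp_rw [mul_assoc]
    exact key_int _ _ hs_meas hs_range (hg_meas.mul hf_meas) hgf_int
  have hint_hf : Integrable (fun v => h v * f v) :=
    key_int h f hmeas hrange hf_meas hf_int
  have hint_sf : Integrable (fun v => (if v ≤ V then (1:ℝ) else 0) * f v) :=
    key_int _ f hs_meas hs_range hf_meas hf_int
  have hsub_gf : ∫ v, ((if v ≤ V then (1:ℝ) else 0) - h v) * g v * f v
      = (∫ v, (if v ≤ V then (1:ℝ) else 0) * g v * f v) - ∫ v, h v * g v * f v := by
    rw [← integral_sub hint_sgf hint_hgf]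
    congr 1; funext v; ring
  rcases le_or_gt t q with hqt | hqt
  · -- case t ≤ q : V = q, use constant κ = min (g q) 0
    have hVq : V = q := max_eq_left hqt
    set κ := min (g q) 0 with hκ
    have hκ0 : κ ≤ 0 := min_le_right _ _
    have hpt : ∀ v, κ * (((if v ≤ V then (1:ℝ) else 0) - h v) * f v)
        ≤ ((if v ≤ V then (1:ℝ) else 0) - h v) * g v * f v := by
      intro v
      rcases le_or_gt v V with hv | hv
      · rw [if_pos hv]
        have hd : 0 ≤ 1 - h v := by linarith [(hrange v).2]
        have hgv : κ ≤ g v := le_trans (min_le_left _ _) (hg_anti (hVq ▸ hv))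
        nlinarith [mul_nonneg (mul_nonneg hd (sub_nonneg.2 hgv)) (hf_nonneg v)]
      · rw [if_neg (not_le.2 hv)]
        have hv' : q < v := hVq ▸ hv
        have hd : 0 - h v ≤ 0 := by linarith [(hrange v).1]
        have hgv : g v ≤ κ := le_min (hg_anti hv'.le) (hg_neg v (lt_of_le_of_lt hqt hv'))
        nlinarith [mul_nonneg (mul_nonneg (neg_nonneg.2 hd) (sub_nonneg.2 hgv)) (hf_nonneg v)]
    have hint_sub_f : Integrable (fun v => ((if v ≤ V then (1:ℝ) else 0) - h v) * f v) := by
      have := hint_sf.sub hint_hf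
      refine this.congr ?_
      filter_upwards with v
      simp only [Pi.sub_apply]
      ring
    have hmono : ∫ v, κ * (((if v ≤ V then (1:ℝ) else 0) - h v) * f v)
        ≤ ∫ v, ((if v ≤ V then (1:ℝ) else 0) - h v) * g v * f v := by
      apply integral_mono (hint_sub_f.const_mul κ) ?_ hpt
      have := hint_sgf.sub hint_hgf
      refine this.congr ?_
      filter_upwards with v
      simp only [Pi.sub_apply]
      ring
    have hsf_c : ∫ v, (if v ≤ V then (1:ℝ) else 0) * f v = c := by
      rw [hsf_eq, hVq, hq]
    have hlhs : ∫ v, κ * (((if v ≤ V then (1:ℝ) else 0) - h v) * f v) = κ * (c - ∫ v, h v * f v) := by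
      rw [integral_const_mul]
      congr 1
      rw [← hsf_c, ← integral_sub hint_sf hint_hf]
      congr 1; funext v; ring
    have hfinal : 0 ≤ κ * (c - ∫ v, h v * f v) :=
      aux_mul_nonneg_of_nonpos_nonpos hκ0 (by linarith)
    rw [hlhs] at hmono
    rw [hsub_gf] at hmono
    linarith
  · -- case q < t : V = t, integrand difference is a.e. nonneg
    have hVt : V = t := max_eq_right hqt.le
    have hne : ∀ᵐ v : ℝ, v ≠ t := by
      rw [ae_iff]
      simp only [not_not, Set.setOf_eq_eq_singleton]
      exact Real.volume_singleton
    have hnn : 0 ≤ ∫ v, ((if v ≤ V then (1:ℝ) else 0) - h v) * g v * f v := by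
      apply integral_nonneg_of_ae
      filter_upwards [hne] with v hv
      rcases lt_or_gt_of_ne hv with hvt | hvt
      · have : v ≤ V := hVt ▸ hvt.le
        rw [if_pos this]
        have hd : 0 ≤ 1 - h v := by linarith [(hrange v).2]
        exact mul_nonneg (mul_nonneg hd (hg_pos v hvt)) (hf_nonneg v)
      · have : ¬ v ≤ V := by rw [hVt]; exact not_le.2 hvt
        rw [if_neg this]
        have hd : 0 - h v ≤ 0 := by linarith [(hrange v).1]
        exact mul_nonneg (aux_mul_nonneg_of_nonpos_nonpos hd (hg_neg v hvt)) (hf_nonneg v)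
    rw [hsub_gf] at hnn
    linarith
end

section
/- Let f : ℝ → ℝ be a nonnegative measurable probability density with CDF F, let μ ∈ [0,1], and let q ∈ ℝ satisfy F(q) = μ. Let w : ℝ × ℝ → ℝ be measurable with w(v₁,·) non-increasing for every v₁, and assume (v₁,v₂) ↦ w(v₁,v₂) f(v₁) f(v₂) is integrable on ℝ². Define h⋆(v₁,v₂) = 1{ v₂ ≤ q or w(v₁,v₂) ≥ 0 }. Then (i) for every v₁, ∫ h⋆(v₁,v₂) f(v₂) dv₂ ≥ μ; and (ii) for every measurable h : ℝ² → [0,1] such that ∫ h(v₁,v₂) f(v₂) dv₂ ≥ μ for almost every v₁, one has ∫∫ h(v₁,v₂) w(v₁,v₂) f(v₁) f(v₂) dv₁ dv₂ ≤ ∫∫ h⋆(v₁,v₂) w(v₁,v₂) f(v₁) f(v₂) dv₁ dv₂. -/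
open MeasureTheory Set


lemma inner_key
    (f : ℝ → ℝ) (hf_meas : Measurable f) (hf_nonneg : ∀ v, 0 ≤ f v)
    (hf_int : Integrable f)
    (μ q : ℝ) (hq : ∫ v in Iic q, f v = μ)
    (W : ℝ → ℝ) (hW_meas : Measurable W) (hW_anti : Antitone W)
    (hWf : Integrable (fun v => W v * f v))
    (h : ℝ → ℝ) (hh_meas : Measurable h) (hh01 : ∀ v, h v ∈ Icc (0:ℝ) 1)
    (hcon : μ ≤ ∫ v, h v * f v) :
    ∫ v, h v * W v * f v ≤
      ∫ v, (if v ≤ q ∨ 0 ≤ W v then (1:ℝ) else 0) * W v * f v := by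
  set H : ℝ → ℝ := fun v => if v ≤ q ∨ 0 ≤ W v then (1:ℝ) else 0 with hH
  set t : ℝ := min (W q) 0 with ht
  have hAmeas : MeasurableSet {v : ℝ | v ≤ q ∨ 0 ≤ W v} :=
    (measurableSet_Iic : MeasurableSet (Iic q)).union (hW_meas measurableSet_Ici)
  have hH_meas : Measurable H := Measurable.ite hAmeas measurable_const measurable_const
  have hH01 : ∀ v, 0 ≤ H v ∧ H v ≤ 1 := by
    intro v; simp only [hH]; split_ifs <;> norm_num
  -- integrability facts
  have ihW : Integrable (fun v => h v * W v * f v) := by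
    refine hWf.norm.mono' ((hh_meas.mul hW_meas).mul hf_meas).aestronglyMeasurable
      (Filter.Eventually.of_forall fun v => ?_)
    have : |h v * W v * f v| = |h v| * |W v * f v| := by
      rw [mul_assoc, abs_mul]
    rw [Real.norm_eq_abs, this]
    calc |h v| * |W v * f v| ≤ 1 * |W v * f v| := by
          apply mul_le_mul_of_nonneg_right _ (abs_nonneg _)
          rw [abs_of_nonneg (hh01 v).1]; exact (hh01 v).2
      _ = |W v * f v| := one_mul _
  have iHW : Integrable (fun v => H v * W v * f v) := by
    refine hWf.norm.mono' ((hH_meas.mul hW_meas).mul hf_meas).aestronglyMeasurable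
      (Filter.Eventually.of_forall fun v => ?_)
    have : |H v * W v * f v| = |H v| * |W v * f v| := by
      rw [mul_assoc, abs_mul]
    rw [Real.norm_eq_abs, this]
    calc |H v| * |W v * f v| ≤ 1 * |W v * f v| := by
          apply mul_le_mul_of_nonneg_right _ (abs_nonneg _)
          rw [abs_of_nonneg (hH01 v).1]; exact (hH01 v).2
      _ = |W v * f v| := one_mul _
  have ihf : Integrable (fun v => h v * f v) := by
    refine hf_int.norm.mono' (hh_meas.mul hf_meas).aestronglyMeasurable
      (Filter.Eventually.of_forall fun v => ?_)
    rw [Real.norm_eq_abs, abs_mul]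
    calc |h v| * |f v| ≤ 1 * |f v| := by
          apply mul_le_mul_of_nonneg_right _ (abs_nonneg _)
          rw [abs_of_nonneg (hh01 v).1]; exact (hh01 v).2
      _ = |f v| := one_mul _
  have iHf : Integrable (fun v => H v * f v) := by
    refine hf_int.norm.mono' (hH_meas.mul hf_meas).aestronglyMeasurable
      (Filter.Eventually.of_forall fun v => ?_)
    rw [Real.norm_eq_abs, abs_mul]
    calc |H v| * |f v| ≤ 1 * |f v| := by
          apply mul_le_mul_of_nonneg_right _ (abs_nonneg _)
          rw [abs_of_nonneg (hH01 v).1]; exact (hH01 v).2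
      _ = |f v| := one_mul _
  -- pointwise key inequality
  have key : ∀ v, 0 ≤ (H v - h v) * (W v - t) * f v := by
    intro v
    by_cases hv : v ≤ q ∨ 0 ≤ W v
    · have h1 : H v = 1 := if_pos hv
      have h2 : 0 ≤ H v - h v := by rw [h1]; linarith [(hh01 v).2]
      have h3 : t ≤ W v := by
        rcases hv with hv | hv
        · exact le_trans (min_le_left _ _) (hW_anti hv)
        · exact le_trans (min_le_right _ _) hv
      exact mul_nonneg (mul_nonneg h2 (by linarith)) (hf_nonneg v)
    · push_neg at hv
      have h1 : H v = 0 := if_neg (by push_neg; exact hv)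
      have h2 : H v - h v ≤ 0 := by rw [h1]; linarith [(hh01 v).1]
      have h3 : W v ≤ t := le_min (hW_anti hv.1.le) hv.2.le
      have : 0 ≤ (H v - h v) * (W v - t) := by
        nlinarith
      exact mul_nonneg this (hf_nonneg v)
  have int_nonneg : 0 ≤ ∫ v, (H v - h v) * (W v - t) * f v :=
    integral_nonneg key
  have comb : ∫ v, (H v - h v) * (W v - t) * f v
      = ((∫ v, H v * W v * f v) - ∫ v, h v * W v * f v)
        - t * ((∫ v, H v * f v) - ∫ v, h v * f v) := by
    have i1 : Integrable (fun v => H v * W v * f v - h v * W v * f v) volume := iHW.sub ihW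
    have i2 : Integrable (fun v => H v * f v - h v * f v) volume := iHf.sub ihf
    rw [← integral_sub iHW ihW, ← integral_sub iHf ihf, ← integral_const_mul,
      ← integral_sub i1 (i2.const_mul t)]
    congr 1; funext v; ring
  rw [comb] at int_nonneg
  -- the t-term is favorable
  have tterm : 0 ≤ t * ((∫ v, H v * f v) - ∫ v, h v * f v) := by
    rcases le_or_gt 0 (W q) with hWq | hWq
    · have : t = 0 := by rw [ht, min_eq_right hWq]
      simp [this]
    · have htW : t = W q := by rw [ht, min_eq_left hWq.le]
      have hHind : (fun v => H v * f v) = (Iic q).indicator f := by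
        funext v
        by_cases hvq : v ≤ q
        · rw [indicator_of_mem (by exact hvq : v ∈ Iic q)]
          simp [hH, hvq]
        · rw [indicator_of_notMem (by simpa using hvq)]
          have : ¬ (v ≤ q ∨ 0 ≤ W v) := by
            push_neg
            exact ⟨lt_of_not_ge hvq, lt_of_le_of_lt (hW_anti (le_of_not_ge hvq)) hWq⟩
          simp [hH, this]
      have hHint : ∫ v, H v * f v = μ := by
        rw [hHind, integral_indicator measurableSet_Iic, hq]
      rw [hHint]
      have h2 : t < 0 := by rw [htW]; exact hWq
      nlinarith
  linarith


/-- Single-player core of the optimal-mechanism proposition: the recommendation rule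
`h⋆(v₁,v₂) = 1{v₂ ≤ q ∨ w(v₁,v₂) ≥ 0}` satisfies the obedience constraint and maximizes
the `w`-weighted objective among all obedient rules. -/
theorem stmt_1
    (f : ℝ → ℝ) (hf_meas : Measurable f) (hf_nonneg : ∀ v, 0 ≤ f v)
    (hf_prob : ∫ v, f v = 1)
    (μ : ℝ) (hμ : μ ∈ Icc (0:ℝ) 1)
    (q : ℝ) (hq : ∫ v in Iic q, f v = μ)
    (w : ℝ → ℝ → ℝ) (hw_meas : Measurable (fun p : ℝ × ℝ => w p.1 p.2))
    (hw_anti : ∀ v₁, Antitone (w v₁))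
    (hw_int : Integrable (fun p : ℝ × ℝ => w p.1 p.2 * (f p.1 * f p.2))) :
    (∀ v₁, μ ≤ ∫ v₂, (if v₂ ≤ q ∨ 0 ≤ w v₁ v₂ then (1:ℝ) else 0) * f v₂) ∧
    ∀ h : ℝ → ℝ → ℝ, Measurable (fun p : ℝ × ℝ => h p.1 p.2) →
      (∀ v₁ v₂, h v₁ v₂ ∈ Icc (0:ℝ) 1) →
      (∀ᵐ v₁ ∂(volume : Measure ℝ), μ ≤ ∫ v₂, h v₁ v₂ * f v₂) →
      ∫ v₁, ∫ v₂, h v₁ v₂ * w v₁ v₂ * (f v₁ * f v₂) ≤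
        ∫ v₁, ∫ v₂, (if v₂ ≤ q ∨ 0 ≤ w v₁ v₂ then (1:ℝ) else 0) * w v₁ v₂ * (f v₁ * f v₂) := by
  have hf_int : Integrable f := by
    by_contra hni
    rw [integral_undef hni] at hf_prob
    norm_num at hf_prob
  -- section measurability
  have hWsec : ∀ v₁, Measurable (fun v₂ => w v₁ v₂) :=
    fun v₁ => hw_meas.comp measurable_prodMk_left
  have hHmeas : ∀ v₁, Measurable (fun v₂ => (if v₂ ≤ q ∨ 0 ≤ w v₁ v₂ then (1:ℝ) else 0)) := by
    intro v₁
    exact Measurable.ite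
      ((measurableSet_Iic : MeasurableSet (Iic q)).union ((hWsec v₁) measurableSet_Ici))
      measurable_const measurable_const
  have hH01 : ∀ v₁ v₂, (if v₂ ≤ q ∨ 0 ≤ w v₁ v₂ then (1:ℝ) else 0) ∈ Icc (0:ℝ) 1 := by
    intro v₁ v₂; split_ifs <;> norm_num
  have iHf : ∀ v₁, Integrable (fun v₂ => (if v₂ ≤ q ∨ 0 ≤ w v₁ v₂ then (1:ℝ) else 0) * f v₂) := by
    intro v₁
    refine hf_int.norm.mono' ((hHmeas v₁).mul hf_meas).aestronglyMeasurable
      (Filter.Eventually.of_forall fun v => ?_)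
    rw [Real.norm_eq_abs, abs_mul]
    calc |if v ≤ q ∨ 0 ≤ w v₁ v then (1:ℝ) else 0| * |f v| ≤ 1 * |f v| := by
          apply mul_le_mul_of_nonneg_right _ (abs_nonneg _)
          rw [abs_of_nonneg (hH01 v₁ v).1]; exact (hH01 v₁ v).2
      _ = |f v| := one_mul _
  -- part (i)
  have part1 : ∀ v₁, μ ≤ ∫ v₂, (if v₂ ≤ q ∨ 0 ≤ w v₁ v₂ then (1:ℝ) else 0) * f v₂ := by
    intro v₁
    have hind : Integrable ((Iic q).indicator f) := hf_int.indicator measurableSet_Iic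
    have hmono : ∀ v₂, (Iic q).indicator f v₂ ≤
        (if v₂ ≤ q ∨ 0 ≤ w v₁ v₂ then (1:ℝ) else 0) * f v₂ := by
      intro v₂
      by_cases hv : v₂ ≤ q
      · rw [indicator_of_mem (by exact hv : v₂ ∈ Iic q), if_pos (Or.inl hv), one_mul]
      · rw [indicator_of_notMem (by simpa using hv)]
        exact mul_nonneg (hH01 v₁ v₂).1 (hf_nonneg v₂)
    calc μ = ∫ v in Iic q, f v := hq.symm
      _ = ∫ v, (Iic q).indicator f v := (integral_indicator measurableSet_Iic).symm
      _ ≤ _ := integral_mono hind (iHf v₁) hmono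
  refine ⟨part1, ?_⟩
  intro h hh_meas hh01 hcon
  set H : ℝ → ℝ → ℝ := fun v₁ v₂ => if v₂ ≤ q ∨ 0 ≤ w v₁ v₂ then (1:ℝ) else 0 with hHdef
  have hw_int' : Integrable (fun p : ℝ × ℝ => w p.1 p.2 * (f p.1 * f p.2))
      ((volume : Measure ℝ).prod volume) := by
    rwa [← Measure.volume_eq_prod]
  have hHmeas' : Measurable (fun p : ℝ × ℝ => H p.1 p.2) := by
    refine Measurable.ite ?_ measurable_const measurable_const
    exact ((measurable_snd measurableSet_Iic).union (hw_meas measurableSet_Ici))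
  -- product integrability of both objectives
  have ibound : ∀ (g : ℝ → ℝ → ℝ), Measurable (fun p : ℝ × ℝ => g p.1 p.2) →
      (∀ v₁ v₂, g v₁ v₂ ∈ Icc (0:ℝ) 1) →
      Integrable (fun p : ℝ × ℝ => g p.1 p.2 * w p.1 p.2 * (f p.1 * f p.2))
        ((volume : Measure ℝ).prod volume) := by
    intro g hg hg01
    refine hw_int'.norm.mono'
      ((hg.mul hw_meas).mul (hf_meas.comp measurable_fst |>.mul
        (hf_meas.comp measurable_snd))).aestronglyMeasurable
      (Filter.Eventually.of_forall fun p => ?_)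
    rw [Real.norm_eq_abs, mul_assoc, abs_mul]
    calc |g p.1 p.2| * |w p.1 p.2 * (f p.1 * f p.2)| ≤ 1 * |w p.1 p.2 * (f p.1 * f p.2)| := by
          apply mul_le_mul_of_nonneg_right _ (abs_nonneg _)
          rw [abs_of_nonneg (hg01 p.1 p.2).1]; exact (hg01 p.1 p.2).2
      _ = |w p.1 p.2 * (f p.1 * f p.2)| := one_mul _
  have ih : Integrable (fun p : ℝ × ℝ => h p.1 p.2 * w p.1 p.2 * (f p.1 * f p.2))
      ((volume : Measure ℝ).prod volume) := ibound h hh_meas hh01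
  have iH : Integrable (fun p : ℝ × ℝ => H p.1 p.2 * w p.1 p.2 * (f p.1 * f p.2))
      ((volume : Measure ℝ).prod volume) := ibound H hHmeas' hH01
  have int_h : Integrable (fun v₁ => ∫ v₂, h v₁ v₂ * w v₁ v₂ * (f v₁ * f v₂)) :=
    ih.integral_prod_left
  have int_H : Integrable (fun v₁ => ∫ v₂, H v₁ v₂ * w v₁ v₂ * (f v₁ * f v₂)) :=
    iH.integral_prod_left
  -- a.e. section integrability
  have hsec : ∀ᵐ v₁ ∂(volume : Measure ℝ),
      Integrable (fun v₂ => w v₁ v₂ * (f v₁ * f v₂)) := hw_int'.prod_right_ae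
  have ae_le : ∀ᵐ v₁ ∂(volume : Measure ℝ),
      ∫ v₂, h v₁ v₂ * w v₁ v₂ * (f v₁ * f v₂) ≤
        ∫ v₂, H v₁ v₂ * w v₁ v₂ * (f v₁ * f v₂) := by
    filter_upwards [hcon, hsec] with v₁ hcon₁ hsec₁
    rcases eq_or_lt_of_le (hf_nonneg v₁) with hfv | hfv
    · simp [← hfv]
    · have hfne : f v₁ ≠ 0 := ne_of_gt hfv
      have hWf : Integrable (fun v₂ => w v₁ v₂ * f v₂) := by
        have h2 := hsec₁.const_mul (f v₁)⁻¹
        have heq : (fun v₂ => w v₁ v₂ * f v₂)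
            = fun v₂ => (f v₁)⁻¹ * (w v₁ v₂ * (f v₁ * f v₂)) := by
          funext v₂; field_simp
        rw [heq]; exact h2
      have inner := inner_key f hf_meas hf_nonneg hf_int μ q hq (w v₁) (hWsec v₁)
        (hw_anti v₁) hWf (h v₁) (hh_meas.comp measurable_prodMk_left) (hh01 v₁) hcon₁
      calc ∫ v₂, h v₁ v₂ * w v₁ v₂ * (f v₁ * f v₂)
          = f v₁ * ∫ v₂, h v₁ v₂ * w v₁ v₂ * f v₂ := by
            rw [← integral_const_mul]; congr 1; funext v₂; ring
        _ ≤ f v₁ * ∫ v₂, H v₁ v₂ * w v₁ v₂ * f v₂ :=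
            mul_le_mul_of_nonneg_left inner (hf_nonneg v₁)
        _ = ∫ v₂, H v₁ v₂ * w v₁ v₂ * (f v₁ * f v₂) := by
            rw [← integral_const_mul]; congr 1; funext v₂; ring
  exact integral_mono_ae int_h int_H ae_le
end

section
/- Let f : ℝ → ℝ be a nonnegative measurable probability density with CDF F and finite first moment ∫ |v| f(v) dv < ∞. Let α > 0, let μ ∈ [0,1], and let q ∈ ℝ satisfy F(q) = μ. Define h₁⋆(v₁,v₂) = 1{ v₂ ≤ max(q, v₁/α) } and h₂⋆(v₁,v₂) = 1{ v₁ ≤ max(q, v₂/α) }. Then for every pair of measurable functions h₁, h₂ : ℝ² → [0,1] satisfying, for almost every v₁, ∫ h₁(v₁,v₂) f(v₂) dv₂ ≥ μ, and for almost every v₂, ∫ h₂(v₁,v₂) f(v₁) dv₁ ≥ μ, one has ∫∫ [ (v₁ − α v₂) h₁(v₁,v₂) + (v₂ − α v₁) h₂(v₁,v₂) ] f(v₁) f(v₂) dv₁ dv₂ ≤ ∫∫ [ (v₁ − α v₂) h₁⋆(v₁,v₂) + (v₂ − α v₁) h₂⋆(v₁,v₂) ] f(v₁) f(v₂) dv₁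 dv₂, and (h₁⋆, h₂⋆) satisfies the same constraints. -/
open MeasureTheory Set

/-!
Welfare splits into one term per player, and by Fubini each term is an average over the
player's own type `c` of `∫ (c - α v) g(v) f(v) dv`, where `g` is the recommendation rule at
that type. This is linear in `g` with a decreasing coefficient, so under `0 ≤ g ≤ 1` and the
obedience constraint `∫ g f ≥ μ` it is maximised by the indicator of `v ≤ m` (bathtub principle).
The threshold is `m = c / α`, where the coefficient changes sign, unless the constraint then
fails, in which case it binds and `m = q`.
-/

noncomputable def thresholdRule (q α v₁ v₂ : ℝ) : ℝ := if v₂ ≤ max q (v₁ / α) then 1 else 0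

noncomputable def welfareTerm (f : ℝ → ℝ) (α : ℝ) (h : ℝ → ℝ → ℝ) : ℝ :=
  ∫ p : ℝ × ℝ, (p.1 - α * p.2) * h p.1 p.2 * (f p.1 * f p.2) ∂(volume.prod volume)

lemma measurable_thresholdRule (q α : ℝ) :
    Measurable fun p : ℝ × ℝ => thresholdRule q α p.1 p.2 :=
  Measurable.ite (measurableSet_le measurable_snd (measurable_const.max
    (measurable_fst.div_const α))) measurable_const measurable_const

lemma thresholdRule_mem_Icc (q α v₁ v₂ : ℝ) : thresholdRule q α v₁ v₂ ∈ Icc (0 : ℝ) 1 := by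
  unfold thresholdRule; split_ifs <;> simp

lemma mul_sub_le_of_antitone {φ : ℝ → ℝ} (hφ : Antitone φ) (m v : ℝ) {g : ℝ}
    (hg : g ∈ Icc (0 : ℝ) 1) :
    φ m * ((if v ≤ m then 1 else 0) - g) ≤ φ v * ((if v ≤ m then 1 else 0) - g) := by
  split_ifs with hvm
  · exact mul_le_mul_of_nonneg_right (hφ hvm) (sub_nonneg.2 hg.2)
  · exact mul_le_mul_of_nonpos_right (hφ (not_le.1 hvm).le) (by linarith [hg.1])

lemma integrable_mul_of_mem_Icc {X : Type*} [MeasurableSpace X] {ν : Measure X} {g F : X → ℝ}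
    (hg : AEStronglyMeasurable g ν) (hg01 : ∀ x, g x ∈ Icc (0 : ℝ) 1) (hF : Integrable F ν) :
    Integrable (fun x => g x * F x) ν :=
  hF.bdd_mul hg (ae_of_all _ fun x =>
    abs_le.2 ⟨by linarith [(hg01 x).1], (hg01 x).2⟩)

lemma integral_ite_le_mul (f : ℝ → ℝ) (m : ℝ) :
    ∫ v, (if v ≤ m then (1 : ℝ) else 0) * f v = ∫ v in Iic m, f v := by
  rw [← integral_indicator measurableSet_Iic]
  congr 1 with v
  simp [indicator_apply, ite_mul]

lemma le_integral_ite_le_mul {f : ℝ → ℝ} (hf_nonneg : ∀ v, 0 ≤ f v) (hfi : Integrable f)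
    {μ q m : ℝ} (hq : ∫ v in Iic q, f v = μ) (hm : q ≤ m) :
    μ ≤ ∫ v, (if v ≤ m then (1 : ℝ) else 0) * f v := by
  rw [integral_ite_le_mul, ← hq]
  exact setIntegral_mono_set hfi.integrableOn (ae_of_all _ hf_nonneg)
    (Iic_subset_Iic.2 hm).eventuallyLE

lemma integral_mul_le_thresholdRule {f : ℝ → ℝ} (hf_nonneg : ∀ v, 0 ≤ f v)
    (hfi : Integrable f) (hvf : Integrable fun v => v * f v) {α μ q : ℝ} (hα : 0 < α)
    (hq : ∫ v in Iic q, f v = μ) (c : ℝ) {g : ℝ → ℝ} (hg : AEStronglyMeasurable g)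
    (hg01 : ∀ v, g v ∈ Icc (0 : ℝ) 1) (hgμ : μ ≤ ∫ v, g v * f v) :
    ∫ v, (c - α * v) * g v * f v ≤ ∫ v, (c - α * v) * thresholdRule q α c v * f v := by
  set m := max q (c / α)
  set χ : ℝ → ℝ := fun v => if v ≤ m then 1 else 0
  have hχ : AEStronglyMeasurable χ :=
    (Measurable.ite measurableSet_Iic measurable_const measurable_const).aestronglyMeasurable
  have hχ01 : ∀ v, χ v ∈ Icc (0 : ℝ) 1 := thresholdRule_mem_Icc q α c
  have hφf : Integrable fun v => (c - α * v) * f v :=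
    ((hfi.const_mul c).sub (hvf.const_mul α)).congr
      (ae_of_all _ fun v => by simp only [Pi.sub_apply]; ring)
  -- complementary slackness: the multiplier `α m - c ≥ 0` vanishes unless obedience binds
  have hsign : 0 ≤ (c - α * m) * ((∫ v, χ v * f v) - ∫ v, g v * f v) := by
    rcases le_or_gt (c / α) q with hcq | hcq
    · have hm : m = q := max_eq_left hcq
      have hc : c - α * m ≤ 0 := by rw [hm]; linarith [(div_le_iff₀' hα).1 hcq]
      have hχμ : ∫ v, χ v * f v = μ := by rw [integral_ite_le_mul, hm, hq]
      exact mul_nonneg_of_nonpos_of_nonpos hc (by linarith)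
    · have hm : m = c / α := max_eq_right hcq.le
      have hc : c - α * m = 0 := by rw [hm]; field_simp; ring
      simp [hc]
  have hχf := integrable_mul_of_mem_Icc hχ hχ01 hfi
  have hgf := integrable_mul_of_mem_Icc hg hg01 hfi
  have hχφf : Integrable fun v => (c - α * v) * χ v * f v :=
    (integrable_mul_of_mem_Icc hχ hχ01 hφf).congr (ae_of_all _ fun v => by ring)
  have hgφf : Integrable fun v => (c - α * v) * g v * f v :=
    (integrable_mul_of_mem_Icc hg hg01 hφf).congr (ae_of_all _ fun v => by ring)
  have hmono : ∫ v, (c - α * m) * (χ v * f v - g v * f v) ≤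
      ∫ v, ((c - α * v) * χ v * f v - (c - α * v) * g v * f v) := by
    refine integral_mono ((hχf.sub hgf).const_mul _) (hχφf.sub hgφf) fun v => ?_
    have hantitone : Antitone fun v => c - α * v := fun a b hab => by nlinarith
    linear_combination mul_le_mul_of_nonneg_right
      (mul_sub_le_of_antitone hantitone m v (hg01 v)) (hf_nonneg v)
  rw [integral_const_mul, integral_sub hχf hgf, integral_sub hχφf hgφf] at hmono
  show _ ≤ ∫ v, (c - α * v) * χ v * f v
  linarith

lemma integrable_welfare_integrand {f : ℝ → ℝ} (hfi : Integrable f)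
    (hvf : Integrable fun v => v * f v) (α : ℝ) {h : ℝ → ℝ → ℝ}
    (hh : Measurable fun p : ℝ × ℝ => h p.1 p.2) (hh01 : ∀ a b, h a b ∈ Icc (0 : ℝ) 1) :
    Integrable (fun p : ℝ × ℝ => (p.1 - α * p.2) * h p.1 p.2 * (f p.1 * f p.2))
      (volume.prod volume) :=
  (integrable_mul_of_mem_Icc hh.aestronglyMeasurable (fun p => hh01 p.1 p.2)
    ((hvf.mul_prod hfi).sub ((hfi.mul_prod hvf).const_mul α))).congr
    (ae_of_all _ fun p => by simp only [Pi.sub_apply]; ring)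

lemma welfare_eq_add {f : ℝ → ℝ} (hfi : Integrable f)
    (hvf : Integrable fun v => v * f v) (α : ℝ) {h₁ h₂ : ℝ → ℝ → ℝ}
    (hh₁ : Measurable fun p : ℝ × ℝ => h₁ p.1 p.2) (hh₂ : Measurable fun p : ℝ × ℝ => h₂ p.1 p.2)
    (hh₁01 : ∀ a b, h₁ a b ∈ Icc (0 : ℝ) 1) (hh₂01 : ∀ a b, h₂ a b ∈ Icc (0 : ℝ) 1) :
    ∫ v₁, ∫ v₂, ((v₁ - α * v₂) * h₁ v₁ v₂ + (v₂ - α * v₁) * h₂ v₁ v₂) * (f v₁ * f v₂) =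
      welfareTerm f α h₁ + welfareTerm f α (fun a b => h₂ b a) := by
  have I₁ := integrable_welfare_integrand hfi hvf α hh₁ hh₁01
  have I₂ : Integrable (fun p : ℝ × ℝ => (p.2 - α * p.1) * h₂ p.1 p.2 * (f p.1 * f p.2))
      (volume.prod volume) :=
    (integrable_welfare_integrand hfi hvf α (h := fun a b => h₂ b a)
      (hh₂.comp measurable_swap) fun a b => hh₂01 b a).swap.congr
      (ae_of_all _ fun p => by simp only [Function.comp_apply, Prod.fst_swap, Prod.snd_swap]; ring)
  have hswap : welfareTerm f α (fun a b => h₂ b a) =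
      ∫ p : ℝ × ℝ, (p.2 - α * p.1) * h₂ p.1 p.2 * (f p.1 * f p.2) ∂(volume.prod volume) := by
    rw [welfareTerm, ← integral_prod_swap]
    congr 1 with p
    simp only [Prod.fst_swap, Prod.snd_swap]
    ring
  rw [hswap, welfareTerm, ← integral_add I₁ I₂, integral_integral ((I₁.add I₂).congr
    (ae_of_all _ fun p => by simp only [Pi.add_apply, Function.uncurry_def]; ring))]
  congr 1 with p
  ring

lemma welfareTerm_le_thresholdRule {f : ℝ → ℝ} (hf_nonneg : ∀ v, 0 ≤ f v)
    (hfi : Integrable f) (hvf : Integrable fun v => v * f v) {α μ q : ℝ} (hα : 0 < α)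
    (hq : ∫ v in Iic q, f v = μ) {h : ℝ → ℝ → ℝ}
    (hh : Measurable fun p : ℝ × ℝ => h p.1 p.2) (hh01 : ∀ a b, h a b ∈ Icc (0 : ℝ) 1)
    (hobed : ∀ᵐ v₁, μ ≤ ∫ v₂, h v₁ v₂ * f v₂) :
    welfareTerm f α h ≤ welfareTerm f α (thresholdRule q α) := by
  have I := integrable_welfare_integrand hfi hvf α hh hh01
  have Iχ := integrable_welfare_integrand hfi hvf α (measurable_thresholdRule q α)
    (thresholdRule_mem_Icc q α)
  rw [welfareTerm, welfareTerm, integral_prod _ I, integral_prod _ Iχ]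
  refine integral_mono_ae I.integral_prod_left Iχ.integral_prod_left ?_
  filter_upwards [hobed] with v₁ hv₁
  have hfactor (g : ℝ → ℝ) : ∫ v₂, (v₁ - α * v₂) * g v₂ * (f v₁ * f v₂) =
      f v₁ * ∫ v₂, (v₁ - α * v₂) * g v₂ * f v₂ := by
    rw [← integral_const_mul]; congr 1 with v₂; ring
  rw [hfactor (h v₁), hfactor (thresholdRule q α v₁)]
  exact mul_le_mul_of_nonneg_left (integral_mul_le_thresholdRule hf_nonneg hfi hvf hα hq v₁
    (hh.comp measurable_prodMk_left).aestronglyMeasurable (hh01 v₁) hv₁) (hf_nonneg v₁)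

theorem stmt_2_general
    (f : ℝ → ℝ) (hf_nonneg : ∀ v, 0 ≤ f v)
    (hf_prob : ∫ v, f v = 1)
    (hf_mom : Integrable (fun v => |v| * f v))
    (α : ℝ) (hα : 0 < α)
    (μ : ℝ)
    (q : ℝ) (hq : ∫ v in Iic q, f v = μ) :
    (∀ v₁, μ ≤ ∫ v₂, (if v₂ ≤ max q (v₁ / α) then (1:ℝ) else 0) * f v₂) ∧
    (∀ v₂, μ ≤ ∫ v₁, (if v₁ ≤ max q (v₂ / α) then (1:ℝ) else 0) * f v₁) ∧
    ∀ h₁ h₂ : ℝ → ℝ → ℝ,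
      Measurable (fun p : ℝ × ℝ => h₁ p.1 p.2) →
      Measurable (fun p : ℝ × ℝ => h₂ p.1 p.2) →
      (∀ v₁ v₂, h₁ v₁ v₂ ∈ Icc (0:ℝ) 1) →
      (∀ v₁ v₂, h₂ v₁ v₂ ∈ Icc (0:ℝ) 1) →
      (∀ᵐ v₁ ∂(volume : Measure ℝ), μ ≤ ∫ v₂, h₁ v₁ v₂ * f v₂) →
      (∀ᵐ v₂ ∂(volume : Measure ℝ), μ ≤ ∫ v₁, h₂ v₁ v₂ * f v₁) →
      ∫ v₁, ∫ v₂, ((v₁ - α * v₂) * h₁ v₁ v₂ + (v₂ - α * v₁) * h₂ v₁ v₂) * (f v₁ * f v₂) ≤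
        ∫ v₁, ∫ v₂, ((v₁ - α * v₂) * (if v₂ ≤ max q (v₁ / α) then (1:ℝ) else 0)
          + (v₂ - α * v₁) * (if v₁ ≤ max q (v₂ / α) then (1:ℝ) else 0)) * (f v₁ * f v₂) := by
  have hfi : Integrable f := .of_integral_ne_zero (by simp [hf_prob])
  have hvf : Integrable fun v => v * f v := hf_mom.mono'
    (continuous_id.aestronglyMeasurable.mul hfi.1)
    (ae_of_all _ fun v => by simp [abs_of_nonneg (hf_nonneg v)])
  refine ⟨fun v₁ => le_integral_ite_le_mul hf_nonneg hfi hq (le_max_left _ _),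
    fun v₂ => le_integral_ite_le_mul hf_nonneg hfi hq (le_max_left _ _), ?_⟩
  intro h₁ h₂ hh₁ hh₂ hh₁01 hh₂01 hobed₁ hobed₂
  have hχ := measurable_thresholdRule q α
  calc _ = welfareTerm f α h₁ + welfareTerm f α (fun a b => h₂ b a) :=
        welfare_eq_add hfi hvf α hh₁ hh₂ hh₁01 hh₂01
    _ ≤ welfareTerm f α (thresholdRule q α) + welfareTerm f α (thresholdRule q α) :=
        add_le_add
          (welfareTerm_le_thresholdRule hf_nonneg hfi hvf hα hq hh₁ hh₁01 hobed₁)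
          (welfareTerm_le_thresholdRule hf_nonneg hfi hvf hα hq (hh₂.comp measurable_swap)
            (fun a b => hh₂01 b a) hobed₂)
    _ = _ := (welfare_eq_add hfi hvf α (h₂ := fun a b => thresholdRule q α b a) hχ
        (hχ.comp measurable_swap) (thresholdRule_mem_Icc q α)
        fun a b => thresholdRule_mem_Icc q α b a).symm

/-- Welfare-optimal information sale for the binary game: the rule
`h₁⋆(v₁,v₂) = 1{v₂ ≤ max(q, v₁/α)}`, `h₂⋆(v₁,v₂) = 1{v₁ ≤ max(q, v₂/α)}` is obedient
and maximizes expected welfare among obedient rules. -/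
theorem stmt_2
    (f : ℝ → ℝ) (hf_meas : Measurable f) (hf_nonneg : ∀ v, 0 ≤ f v)
    (hf_prob : ∫ v, f v = 1)
    (hf_mom : Integrable (fun v => |v| * f v))
    (α : ℝ) (hα : 0 < α)
    (μ : ℝ) (hμ : μ ∈ Icc (0:ℝ) 1)
    (q : ℝ) (hq : ∫ v in Iic q, f v = μ) :
    (∀ v₁, μ ≤ ∫ v₂, (if v₂ ≤ max q (v₁ / α) then (1:ℝ) else 0) * f v₂) ∧
    (∀ v₂, μ ≤ ∫ v₁, (if v₁ ≤ max q (v₂ / α) then (1:ℝ) else 0) * f v₁) ∧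
    ∀ h₁ h₂ : ℝ → ℝ → ℝ,
      Measurable (fun p : ℝ × ℝ => h₁ p.1 p.2) →
      Measurable (fun p : ℝ × ℝ => h₂ p.1 p.2) →
      (∀ v₁ v₂, h₁ v₁ v₂ ∈ Icc (0:ℝ) 1) →
      (∀ v₁ v₂, h₂ v₁ v₂ ∈ Icc (0:ℝ) 1) →
      (∀ᵐ v₁ ∂(volume : Measure ℝ), μ ≤ ∫ v₂, h₁ v₁ v₂ * f v₂) →
      (∀ᵐ v₂ ∂(volume : Measure ℝ), μ ≤ ∫ v₁, h₂ v₁ v₂ * f v₁) →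
      ∫ v₁, ∫ v₂, ((v₁ - α * v₂) * h₁ v₁ v₂ + (v₂ - α * v₁) * h₂ v₁ v₂) * (f v₁ * f v₂) ≤
        ∫ v₁, ∫ v₂, ((v₁ - α * v₂) * (if v₂ ≤ max q (v₁ / α) then (1:ℝ) else 0)
          + (v₂ - α * v₁) * (if v₁ ≤ max q (v₂ / α) then (1:ℝ) else 0)) * (f v₁ * f v₂) :=
  stmt_2_general f hf_nonneg hf_prob hf_mom α hα μ q hq
end

section
/- Let F : ℝ → ℝ be non-decreasing with 0 ≤ F(v) ≤ 1 for all v, let α > 0, and let v⋆ ∈ ℝ. Then the function v ↦ max{F(v⋆), F(v/α)} + α · 1{v > v⋆} · F(α v) − α is non-decreasing on ℝ. -/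
open Set

/-- Monotonicity of the interim market share under the welfare-maximizing (second best)
recommendation rule: `v ↦ max{F(v⋆), F(v/α)} + α·1{v > v⋆}·F(αv) − α` is non-decreasing. -/
theorem stmt_3
    (F : ℝ → ℝ) (hF_mono : Monotone F) (hF01 : ∀ v, F v ∈ Icc (0:ℝ) 1)
    (α : ℝ) (hα : 0 < α) (vs : ℝ) :
    Monotone (fun v : ℝ =>
      max (F vs) (F (v / α)) + α * (if vs < v then (1:ℝ) else 0) * F (α * v) - α) := by
  intro a b hab
  simp only
  have h1 : max (F vs) (F (a / α)) ≤ max (F vs) (F (b / α)) :=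
    max_le_max le_rfl (hF_mono (by gcongr))
  have h2 : α * (if vs < a then (1:ℝ) else 0) * F (α * a)
      ≤ α * (if vs < b then (1:ℝ) else 0) * F (α * b) := by
    by_cases ha : vs < a
    · have hb : vs < b := lt_of_lt_of_le ha hab
      simp only [ha, hb, if_pos]
      have := hF_mono (mul_le_mul_of_nonneg_left hab hα.le)
      nlinarith
    · simp only [ha, if_neg, not_false_iff, mul_zero, zero_mul]
      by_cases hb : vs < b
      · simp only [hb, if_pos, mul_one]
        exact mul_nonneg hα.le (hF01 (α * b)).1
      · simp [hb]
  linarith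
end

section
/- Let v̲ ≤ v̄ be reals, let π : [v̲, v̄] → ℝ be non-decreasing and integrable, let K ∈ ℝ with K ≤ π(v̲), and let p : [v̲, v̄] → ℝ satisfy p(v) = v·π(v) − v̲·π(v̲) + p(v̲) − ∫_{v̲}^{v} π(s) ds for all v. Define the interim utility ũ(v) = v·π(v) − p(v). Then ũ(v) ≥ v·K holds for all v ∈ [v̲, v̄] if and only if ũ(v̲) ≥ v̲·K. -/
/-!
The Myerson formula gives `ũ(v) = ũ(v̲) + ∫_{v̲}^{v} π`, and since `π ≥ π(v̲) ≥ K` on `[v̲, v]`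
the integral is at least `(v - v̲) K`; so the outside-option constraint at `v̲` propagates upward.
-/

open MeasureTheory Set

theorem MonotoneOn.sub_mul_le_intervalIntegral {f : ℝ → ℝ} {a b : ℝ}
    (hf : MonotoneOn f (Icc a b)) (hab : a ≤ b) : (b - a) * f a ≤ ∫ x in a..b, f x := by
  have hf_int : IntervalIntegrable f volume a b :=
    MonotoneOn.intervalIntegrable (by rwa [uIcc_of_le hab])
  calc (b - a) * f a = ∫ _ in a..b, f a := by simp
    _ ≤ ∫ x in a..b, f x :=
      intervalIntegral.integral_mono_on hab intervalIntegrable_const hf_int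
        fun x hx ↦ hf (left_mem_Icc.2 hab) hx hx.1

theorem stmt_5_general
    (vl vh : ℝ) (hle : vl ≤ vh) (π p : ℝ → ℝ)
    (hπ_mono : MonotoneOn π (Icc vl vh))
    (K : ℝ) (hK : K ≤ π vl)
    (hp : ∀ v ∈ Icc vl vh, p v = v * π v - vl * π vl + p vl - ∫ s in vl..v, π s) :
    (∀ v ∈ Icc vl vh, v * K ≤ v * π v - p v) ↔ vl * K ≤ vl * π vl - p vl := by
  refine ⟨fun h ↦ h vl (left_mem_Icc.2 hle), fun h_low v hv ↦ ?_⟩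
  have h_utility : v * π v - p v = vl * π vl - p vl + ∫ s in vl..v, π s := by
    rw [hp v hv]; ring
  have h_integral : (v - vl) * π vl ≤ ∫ s in vl..v, π s :=
    (hπ_mono.mono (Icc_subset_Icc_right hv.2)).sub_mul_le_intervalIntegral hv.1
  have h_outside : (v - vl) * K ≤ (v - vl) * π vl :=
    mul_le_mul_of_nonneg_left hK (sub_nonneg.2 hv.1)
  rw [h_utility]
  linarith

/-- Individual rationality reduces to the lowest type: under the Myerson payment formula
with non-decreasing interim share `π` and outside option `K ≤ π(v̲)`, the interim utility
`ũ(v) = v·π(v) − p(v)` satisfies `ũ(v) ≥ v·K` for all types iff it does at the lowest type. -/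
theorem stmt_5
    (vl vh : ℝ) (hle : vl ≤ vh) (π p : ℝ → ℝ)
    (hπ_mono : MonotoneOn π (Icc vl vh)) (hπ_int : IntegrableOn π (Icc vl vh))
    (K : ℝ) (hK : K ≤ π vl)
    (hp : ∀ v ∈ Icc vl vh, p v = v * π v - vl * π vl + p vl - ∫ s in vl..v, π s) :
    (∀ v ∈ Icc vl vh, v * K ≤ v * π v - p v) ↔ vl * K ≤ vl * π vl - p vl :=
  stmt_5_general vl vh hle π p hπ_mono K hK hp
end

section
/- Let v̲ ≤ v̄ be reals, let f : ℝ → ℝ be a nonnegative measurable probability density supported on [v̲, v̄] with CDF F, and let π : [v̲, v̄] → ℝ be bounded and measurable. Then ∫_{v̲}^{v̄} [ v·π(v) − ∫_{v̲}^{v} π(s) ds ] f(v) dv = ∫_{v̲}^{v̄} π(v) · ( v·f(v) − (1 − F(v)) ) dv. In particular, if f > 0 on [v̲, v̄] and φ(v) = v − (1 − F(v))/f(v), this equals ∫_{v̲}^{v̄} φ(v) π(v) f(v) dv. -/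
/-! Both sides are integrals of `π s * f v` over the triangle `vl < s ≤ v ≤ vh`. Integrating
first in `s` pairs the primitive of `π` with `f`; integrating first in `v` pairs `π` with the tail
mass `∫ v in s..vh, f v = 1 - F s` (Fubini). The term `v * π v * f v` is common to both sides, and
the virtual-value form follows by cancelling `f v ≠ 0`. -/

open MeasureTheory Set

section TriangleSwap

variable {μ ν : Measure ℝ} [SFinite μ] [SFinite ν] {g h : ℝ → ℝ}

theorem integral_setIntegral_Iic_mul_eq_integral_mul_setIntegral_Ici
    (hg : Integrable g μ) (hh : Integrable h ν) :
    ∫ v, (∫ s in Iic v, g s ∂μ) * h v ∂ν = ∫ s, g s * ∫ v in Ici s, h v ∂ν ∂μ := by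
  set K : ℝ × ℝ → ℝ := {p | p.1 ≤ p.2}.indicator fun p => g p.1 * h p.2
  have hK : Integrable K (μ.prod ν) :=
    (hg.mul_prod hh).indicator (measurableSet_le measurable_fst measurable_snd)
  have fiber_left (v : ℝ) : (fun s => K (s, v)) = (Iic v).indicator fun s => g s * h v := by
    ext s; simp only [K, indicator_apply, mem_ofPred_eq, mem_Iic]
  have fiber_right (s : ℝ) : (fun v => K (s, v)) = (Ici s).indicator fun v => g s * h v := by
    ext v; simp only [K, indicator_apply, mem_ofPred_eq, mem_Ici]
  calc ∫ v, (∫ s in Iic v, g s ∂μ) * h v ∂ν = ∫ v, ∫ s, K (s, v) ∂μ ∂ν := by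
        simp_rw [fiber_left, integral_indicator measurableSet_Iic, integral_mul_const]
    _ = ∫ s, ∫ v, K (s, v) ∂ν ∂μ := by rw [← integral_prod_symm K hK, integral_prod K hK]
    _ = ∫ s, g s * ∫ v in Ici s, h v ∂ν ∂μ := by
        simp_rw [fiber_right, integral_indicator measurableSet_Ici, integral_const_mul]

variable [NullSingletonClass μ] {a b : ℝ}

theorem intervalIntegral_integral_mul_eq_integral_mul_intervalIntegral
    (hg : IntervalIntegrable g μ a b) (hh : IntervalIntegrable h μ a b) :
    ∫ v in a..b, (∫ s in a..v, g s ∂μ) * h v ∂μ = ∫ s in a..b, g s * ∫ v in s..b, h v ∂μ ∂μ := by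
  wlog hab : a ≤ b generalizing g h a b
  -- for `b < a` this is the same triangle identity on `[b, a]` with `g` and `h` exchanged
  · have swapped := this hh.symm hg.symm (le_of_not_ge hab)
    simp only [intervalIntegral.integral_symm _ a (f := g),
      intervalIntegral.integral_symm b _ (f := h)]
    rw [intervalIntegral.integral_symm b a, intervalIntegral.integral_symm b a]
    simp only [neg_mul, mul_neg, intervalIntegral.integral_neg, neg_neg]
    simpa only [mul_comm] using swapped.symm
  have key := integral_setIntegral_Iic_mul_eq_integral_mul_setIntegral_Ici
    ((intervalIntegrable_iff_integrableOn_Ioc_of_le hab).1 hg)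
    ((intervalIntegrable_iff_integrableOn_Ioc_of_le hab).1 hh)
  simp only [Measure.restrict_restrict measurableSet_Iic,
    Measure.restrict_restrict measurableSet_Ici] at key
  rw [intervalIntegral.integral_of_le hab, intervalIntegral.integral_of_le hab]
  convert key using 1
  · refine setIntegral_congr_fun measurableSet_Ioc fun v hv => ?_
    rw [intervalIntegral.integral_of_le hv.1.le, Iic_inter_Ioc_of_le hv.2]
  · refine setIntegral_congr_fun measurableSet_Ioc fun s hs => ?_
    have hset : Ici s ∩ Ioc a b = Icc s b := by
      ext x; simp only [mem_inter_iff, mem_Ici, mem_Ioc, mem_Icc]; grind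
    rw [intervalIntegral.integral_of_le hs.2, hset, integral_Icc_eq_integral_Ioc]

end TriangleSwap

theorem integral_sub_setIntegral_Iic_eq_intervalIntegral {E : Type*} [NormedAddCommGroup E]
    [NormedSpace ℝ E] {μ : Measure ℝ} {f : ℝ → E} {b : ℝ} (hf : Integrable f μ)
    (hsupp : Function.support f ⊆ Iic b) (s : ℝ) :
    ∫ x, f x ∂μ - ∫ x in Iic s, f x ∂μ = ∫ x in s..b, f x ∂μ := by
  rw [← setIntegral_eq_integral_of_forall_compl_eq_zero fun x hx =>
      Function.notMem_support.1 fun hx' => hx (hsupp hx'),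
    intervalIntegral.integral_Iic_sub_Iic hf.integrableOn hf.integrableOn]

theorem intervalIntegral_mul_sub_primitive_mul_eq {g h : ℝ → ℝ} {a b : ℝ}
    (hg : IntegrableOn g (uIcc a b)) (hh : IntegrableOn h (uIcc a b))
    (hgh : IntegrableOn (fun v => g v * h v) (uIcc a b)) :
    ∫ v in a..b, (v * g v - ∫ s in a..v, g s) * h v =
      ∫ v in a..b, g v * (v * h v - ∫ s in v..b, h s) := by
  have hvgh : IntervalIntegrable (fun v => v * (g v * h v)) volume a b :=
    hgh.intervalIntegrable.continuousOn_mul (continuousOn_id' _)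
  calc ∫ v in a..b, (v * g v - ∫ s in a..v, g s) * h v
      = ∫ v in a..b, v * (g v * h v) - (∫ s in a..v, g s) * h v := by
        congr 1; ext v; ring
    _ = (∫ v in a..b, v * (g v * h v)) - ∫ v in a..b, g v * ∫ s in v..b, h s := by
        rw [intervalIntegral.integral_sub hvgh
          (hh.intervalIntegrable.continuousOn_mul
            (intervalIntegral.continuousOn_primitive_interval hg)),
          intervalIntegral_integral_mul_eq_integral_mul_intervalIntegral
            hg.intervalIntegrable hh.intervalIntegrable]
    _ = ∫ v in a..b, g v * (v * h v - ∫ s in v..b, h s) := by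
        rw [← intervalIntegral.integral_sub hvgh
          (hg.intervalIntegrable.mul_continuousOn
            (intervalIntegral.continuousOn_primitive_interval_left hh))]
        congr 1; ext v; ring

theorem stmt_6_general
    (vl vh : ℝ) (hle : vl ≤ vh)
    (f : ℝ → ℝ)
    (hf_prob : ∫ v, f v = 1) (hf_supp : Function.support f ⊆ Icc vl vh)
    (π : ℝ → ℝ) (hπ_meas : Measurable π)
    (C : ℝ) (hπ_bdd : ∀ v ∈ Icc vl vh, |π v| ≤ C) :
    (∫ v in vl..vh, (v * π v - ∫ s in vl..v, π s) * f v =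
      ∫ v in vl..vh, π v * (v * f v - (1 - ∫ s in Iic v, f s))) ∧
    ((∀ v ∈ Icc vl vh, 0 < f v) →
      ∫ v in vl..vh, (v * π v - ∫ s in vl..v, π s) * f v =
        ∫ v in vl..vh, (v - (1 - ∫ s in Iic v, f s) / f v) * π v * f v) := by
  have hf : Integrable f := .of_integral_ne_zero (by simp [hf_prob])
  have tail (s : ℝ) : 1 - ∫ v in Iic s, f v = ∫ v in s..vh, f v := by
    rw [← hf_prob, integral_sub_setIntegral_Iic_eq_intervalIntegral hf
      (hf_supp.trans Icc_subset_Iic_self)]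
  rw [← uIcc_of_le hle] at hπ_bdd
  have hπ_bdd_ae : ∀ᵐ v ∂volume.restrict (uIcc vl vh), ‖π v‖ ≤ C :=
    (ae_restrict_iff' measurableSet_uIcc).2 (.of_forall hπ_bdd)
  have hπ : IntegrableOn π (uIcc vl vh) :=
    Measure.integrableOn_of_bounded measure_Icc_lt_top.ne hπ_meas.aestronglyMeasurable hπ_bdd_ae
  have revenue : ∫ v in vl..vh, (v * π v - ∫ s in vl..v, π s) * f v =
      ∫ v in vl..vh, π v * (v * f v - (1 - ∫ s in Iic v, f s)) := by
    simpa only [tail] using intervalIntegral_mul_sub_primitive_mul_eq hπ hf.integrableOn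
      (hf.integrableOn.bdd_mul hπ_meas.aestronglyMeasurable hπ_bdd_ae)
  refine ⟨revenue, fun hf_pos => ?_⟩
  rw [revenue]
  refine intervalIntegral.integral_congr fun v hv => ?_
  have hfv : f v ≠ 0 := (hf_pos v (uIcc_of_le hle ▸ hv)).ne'
  field_simp

/-- Reduction of expected revenue to expected virtual surplus (Fubini identity):
`∫ (v·π(v) − ∫_{v̲}^{v} π) f(v) dv = ∫ π(v)(v·f(v) − (1 − F(v))) dv`, and with
`φ(v) = v − (1 − F(v))/f(v)` this equals `∫ φ π f` when `f > 0` on `[v̲, v̄]`. -/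
theorem stmt_6
    (vl vh : ℝ) (hle : vl ≤ vh)
    (f : ℝ → ℝ) (hf_meas : Measurable f) (hf_nonneg : ∀ v, 0 ≤ f v)
    (hf_prob : ∫ v, f v = 1) (hf_supp : Function.support f ⊆ Icc vl vh)
    (π : ℝ → ℝ) (hπ_meas : Measurable π)
    (C : ℝ) (hπ_bdd : ∀ v ∈ Icc vl vh, |π v| ≤ C) :
    (∫ v in vl..vh, (v * π v - ∫ s in vl..v, π s) * f v =
      ∫ v in vl..vh, π v * (v * f v - (1 - ∫ s in Iic v, f s))) ∧
    ((∀ v ∈ Icc vl vh, 0 < f v) →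
      ∫ v in vl..vh, (v * π v - ∫ s in vl..v, π s) * f v =
        ∫ v in vl..vh, (v - (1 - ∫ s in Iic v, f s) / f v) * π v * f v) :=
  stmt_6_general vl vh hle f hf_prob hf_supp π hπ_meas C hπ_bdd
end

section
/- Let v̲ ≤ v̄ be reals, let f : ℝ → ℝ be a nonnegative probability density supported on [v̲, v̄] with f > 0 on [v̲, v̄], CDF F, and virtual value φ(v) = v − (1 − F(v))/f(v); assume φ is non-decreasing on [v̲, v̄] (regularity). Let α > 0, let μ ∈ [0,1], and let q ∈ [v̲, v̄] satisfy F(q) = μ. Define h₁⋆(v₁,v₂) = 1{ v₂ ≤ q or α·φ(v₂) ≤ φ(v₁) } and h₂⋆(v₁,v₂) = 1{ v₁ ≤ q or α·φ(v₁) ≤ φ(v₂) }. Then for every pair of measurable functions h₁, h₂ : [v̲,v̄]² → [0,1] satisfying, for almost every v₁, ∫ h₁(v₁,v₂) f(v₂) dv₂ ≥ μ, and for almost every v₂, ∫ h₂(v₁,v₂) f(v₁) dv₁ ≥ μ, one has ∫∫ [ (φ(v₁) − α φ(v₂)) h₁ + (φ(v₂) − α φ(v₁)) h₂ ] f(v₁)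 f(v₂) dv₁ dv₂ ≤ ∫∫ [ (φ(v₁) − α φ(v₂)) h₁⋆ + (φ(v₂) − α φ(v₁)) h₂⋆ ] f(v₁) f(v₂) dv₁ dv₂, and (h₁⋆, h₂⋆) satisfies the same constraints. -/
open MeasureTheory Set

private lemma intOn (a b C : ℝ) (f w : ℝ → ℝ) (hf : Measurable f) (hf0 : ∀ v, 0 ≤ f v)
    (hfi : IntegrableOn f (Icc a b)) (hw : Measurable w)
    (hwb : ∀ v ∈ Icc a b, |w v| ≤ C) : IntegrableOn (fun v => w v * f v) (Icc a b) := by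
  refine (hfi.const_mul C).mono' (hw.mul hf).aestronglyMeasurable ?_
  refine (ae_restrict_iff' measurableSet_Icc).2 (ae_of_all _ fun v hv => ?_)
  rw [Real.norm_eq_abs, abs_mul, abs_of_nonneg (hf0 v)]
  exact mul_le_mul_of_nonneg_right (hwb v hv) (hf0 v)

private lemma habs_sub (x y : ℝ) : |x - y| ≤ |x| + |y| := by
  rw [sub_eq_add_neg]
  exact (abs_add_le x (-y)).trans_eq (by rw [abs_neg])

private lemma lemA (vl vh q : ℝ) (hq : q ∈ Icc vl vh)
    (f : ℝ → ℝ) (hf_meas : Measurable f) (hf0 : ∀ v, 0 ≤ f v)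
    (hfi : IntegrableOn f (Icc vl vh))
    (ψ : ℝ → ℝ) (hψm : Monotone ψ)
    (α μ c : ℝ) (hα : 0 < α)
    (hmu : ∫ v in Icc vl vh ∩ Iic q, f v = μ)
    (h : ℝ → ℝ) (hh : Measurable h) (hh01 : ∀ v ∈ Icc vl vh, h v ∈ Icc (0:ℝ) 1)
    (hcon : μ ≤ ∫ v in Icc vl vh, h v * f v) :
    ∫ v in Icc vl vh, (c - α * ψ v) * h v * f v ≤
      ∫ v in Icc vl vh, (c - α * ψ v) * (if v ≤ q ∨ α * ψ v ≤ c then (1:ℝ) else 0) * f v := by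
  classical
  set I := Icc vl vh with hIdef
  have hI : MeasurableSet I := measurableSet_Icc
  set hs : ℝ → ℝ := fun v => if v ≤ q ∨ α * ψ v ≤ c then (1:ℝ) else 0 with hhs
  have hψmeas : Measurable ψ := hψm.measurable
  have hSmeas : MeasurableSet {v : ℝ | v ≤ q ∨ α * ψ v ≤ c} :=
    (measurableSet_Iic).union (measurableSet_le (measurable_const.mul hψmeas) measurable_const)
  have hsmeas : Measurable hs := Measurable.ite hSmeas measurable_const measurable_const
  have hs01 : ∀ v, hs v ∈ Icc (0:ℝ) 1 := by
    intro v; simp only [hhs]; split <;> norm_num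
  set c₀ : ℝ := min 0 (c - α * ψ q) with hc₀def
  have hc₀ : c₀ ≤ 0 := min_le_left _ _
  set B : ℝ := |c| + α * (|ψ vl| + |ψ vh|) with hBdef
  have hgb : ∀ v ∈ I, |c - α * ψ v| ≤ B := by
    intro v hv
    have h1 : ψ vl ≤ ψ v := hψm hv.1
    have h2 : ψ v ≤ ψ vh := hψm hv.2
    have h3 : |ψ v| ≤ |ψ vl| + |ψ vh| := by
      rw [abs_le]
      constructor
      · nlinarith [neg_abs_le (ψ vl), abs_nonneg (ψ vh)]
      · nlinarith [le_abs_self (ψ vh), abs_nonneg (ψ vl)]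
    calc |c - α * ψ v| ≤ |c| + |α * ψ v| := habs_sub _ _
      _ ≤ B := by rw [abs_mul, abs_of_pos hα]; nlinarith
  -- integrability
  have Ihf : IntegrableOn (fun v => h v * f v) I :=
    intOn vl vh 1 f h hf_meas hf0 hfi hh
      (fun v hv => abs_le.2 ⟨by linarith [(hh01 v hv).1], (hh01 v hv).2⟩)
  have Isf : IntegrableOn (fun v => hs v * f v) I :=
    intOn vl vh 1 f hs hf_meas hf0 hfi hsmeas
      (fun v hv => abs_le.2 ⟨by linarith [(hs01 v).1], (hs01 v).2⟩)
  have Ighf : IntegrableOn (fun v => (c - α * ψ v) * h v * f v) I := by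
    refine intOn vl vh B f _ hf_meas hf0 hfi
      ((measurable_const.sub (measurable_const.mul hψmeas)).mul hh) (fun v hv => ?_)
    rw [abs_mul]
    have := hgb v hv
    have h01 := hh01 v hv
    have : |h v| ≤ 1 := abs_le.2 ⟨by linarith [h01.1], h01.2⟩
    nlinarith [abs_nonneg (c - α * ψ v), abs_nonneg (h v), hgb v hv]
  have Igsf : IntegrableOn (fun v => (c - α * ψ v) * hs v * f v) I := by
    refine intOn vl vh B f _ hf_meas hf0 hfi
      ((measurable_const.sub (measurable_const.mul hψmeas)).mul hsmeas) (fun v hv => ?_)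
    rw [abs_mul]
    have : |hs v| ≤ 1 := abs_le.2 ⟨by linarith [(hs01 v).1], (hs01 v).2⟩
    nlinarith [abs_nonneg (c - α * ψ v), abs_nonneg (hs v), hgb v hv]
  -- the nonnegative integral
  have hE : 0 ≤ ∫ v in I, ((c - α * ψ v) - c₀) * (hs v - h v) * f v := by
    refine setIntegral_nonneg hI (fun v hv => ?_)
    have h01 := hh01 v hv
    by_cases hP : v ≤ q ∨ α * ψ v ≤ c
    · have hs1 : hs v = 1 := by simp only [hhs]; rw [if_pos hP]
      have hge : c₀ ≤ c - α * ψ v := by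
        rcases hP with hP | hP
        · have : ψ v ≤ ψ q := hψm hP
          calc c₀ ≤ c - α * ψ q := min_le_right _ _
            _ ≤ c - α * ψ v := by nlinarith
        · calc c₀ ≤ 0 := hc₀
            _ ≤ c - α * ψ v := by linarith
      rw [hs1]
      have : 0 ≤ (c - α * ψ v - c₀) * (1 - h v) :=
        mul_nonneg (by linarith) (by linarith [h01.2])
      exact mul_nonneg this (hf0 v)
    · push_neg at hP
      obtain ⟨hq1, hq2⟩ := hP
      have hs0 : hs v = 0 := by simp only [hhs]; rw [if_neg]; push_neg; exact ⟨hq1, hq2⟩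
      have hle' : c - α * ψ v ≤ c₀ := by
        have : ψ q ≤ ψ v := hψm (le_of_lt hq1)
        refine le_min (by linarith) (by nlinarith)
      rw [hs0]
      have h2 : 0 ≤ (-(c - α * ψ v - c₀)) * (-(0 - h v)) :=
        mul_nonneg (by linarith) (by linarith [h01.1])
      rw [neg_mul_neg] at h2
      exact mul_nonneg h2 (hf0 v)
  -- expand
  have hsplit : ∫ v in I, ((c - α * ψ v) - c₀) * (hs v - h v) * f v =
      (∫ v in I, (c - α * ψ v) * hs v * f v) - (∫ v in I, (c - α * ψ v) * h v * f v)
        - c₀ * ((∫ v in I, hs v * f v) - (∫ v in I, h v * f v)) := by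
    have heq : (fun v => ((c - α * ψ v) - c₀) * (hs v - h v) * f v) =
        fun v => ((c - α * ψ v) * hs v * f v - (c - α * ψ v) * h v * f v)
          - (c₀ * (hs v * f v) - c₀ * (h v * f v)) := by
      funext v; ring
    rw [heq,
      integral_sub (f := fun v => (c - α * ψ v) * hs v * f v - (c - α * ψ v) * h v * f v)
        (g := fun v => c₀ * (hs v * f v) - c₀ * (h v * f v))
        (Igsf.sub Ighf) ((Isf.const_mul c₀).sub (Ihf.const_mul c₀)),
      integral_sub (f := fun v => (c - α * ψ v) * hs v * f v)
        (g := fun v => (c - α * ψ v) * h v * f v) Igsf Ighf,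
      integral_sub (f := fun v => c₀ * (hs v * f v)) (g := fun v => c₀ * (h v * f v))
        (Isf.const_mul c₀) (Ihf.const_mul c₀),
      integral_const_mul, integral_const_mul]
    ring
  -- the constraint term
  have hterm : 0 ≤ c₀ * ((∫ v in I, hs v * f v) - (∫ v in I, h v * f v)) := by
    rcases eq_or_lt_of_le hc₀ with hc0 | hc0
    · rw [hc0]; simp
    · have hlt : c - α * ψ q < 0 := by
        by_contra hge
        push_neg at hge
        have : c₀ = 0 := by rw [hc₀def, min_eq_left hge]  -- wrong direction?
        linarith
      have hseq : ∀ v ∈ I, hs v = if v ≤ q then (1:ℝ) else 0 := by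
        intro v hv
        by_cases hvq : v ≤ q
        · simp only [hhs]; rw [if_pos (Or.inl hvq), if_pos hvq]
        · simp only [hhs]; rw [if_neg, if_neg hvq]
          push_neg
          refine ⟨lt_of_not_ge hvq, ?_⟩
          have : ψ q ≤ ψ v := hψm (le_of_not_ge hvq)
          nlinarith
      have hsint : ∫ v in I, hs v * f v = μ := by
        rw [setIntegral_congr_fun hI (fun v hv => by rw [hseq v hv])]
        have : (fun v => (if v ≤ q then (1:ℝ) else 0) * f v) = (Iic q).indicator f := by
          funext v
          by_cases hvq : v ≤ q
          · simp [Set.indicator_apply, hvq]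
          · simp [Set.indicator_apply, hvq]
        rw [this, setIntegral_indicator measurableSet_Iic, hmu]
      rw [hsint]
      nlinarith
  show ∫ v in I, (c - α * ψ v) * h v * f v ≤ ∫ v in I, (c - α * ψ v) * hs v * f v
  linarith

private lemma obed (vl vh q α μ c : ℝ) (f ψ : ℝ → ℝ) (hf : Measurable f) (hf0 : ∀ v, 0 ≤ f v)
    (hfi : IntegrableOn f (Icc vl vh)) (hψ : Measurable ψ)
    (hmu : ∫ v in Icc vl vh ∩ Iic q, f v = μ) :
    μ ≤ ∫ v in Icc vl vh, (if v ≤ q ∨ α * ψ v ≤ c then (1:ℝ) else 0) * f v := by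
  classical
  have hI : MeasurableSet (Icc vl vh) := measurableSet_Icc
  have h1 : ∫ v in Icc vl vh, (Iic q).indicator f v = μ := by
    rw [setIntegral_indicator measurableSet_Iic]; exact hmu
  rw [← h1]
  refine setIntegral_mono_on (hfi.indicator measurableSet_Iic)
    (intOn vl vh 1 f _ hf hf0 hfi
      (Measurable.ite ((measurableSet_Iic).union
        (measurableSet_le (measurable_const.mul hψ) measurable_const))
        measurable_const measurable_const)
      (fun v _ => by split <;> simp)) hI (fun v _ => ?_)
  by_cases hvq : v ≤ q
  · rw [Set.indicator_of_mem (mem_Iic.2 hvq), if_pos (Or.inl hvq), one_mul]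
  · rw [Set.indicator_of_notMem (by simpa using hvq)]
    exact mul_nonneg (by split <;> norm_num) (hf0 v)
/-- Revenue-optimal information sale for the binary game with regular i.i.d. types:
the rule `h₁⋆(v₁,v₂) = 1{v₂ ≤ q ∨ α·φ(v₂) ≤ φ(v₁)}` (and symmetrically `h₂⋆`) is obedient
and maximizes the virtual surplus among obedient rules. -/
theorem stmt_7
    (vl vh : ℝ) (hle : vl ≤ vh)
    (f : ℝ → ℝ) (hf_meas : Measurable f) (hf_nonneg : ∀ v, 0 ≤ f v)
    (hf_prob : ∫ v, f v = 1) (hf_supp : Function.support f ⊆ Icc vl vh)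
    (hf_pos : ∀ v ∈ Icc vl vh, 0 < f v)
    (φ : ℝ → ℝ)
    (hφ_def : ∀ v ∈ Icc vl vh, φ v = v - (1 - ∫ s in Iic v, f s) / f v)
    (hφ_mono : MonotoneOn φ (Icc vl vh))
    (α : ℝ) (hα : 0 < α)
    (μ : ℝ) (hμ : μ ∈ Icc (0:ℝ) 1)
    (q : ℝ) (hq_mem : q ∈ Icc vl vh) (hq : ∫ v in Iic q, f v = μ) :
    ((∀ᵐ v₁ ∂(volume.restrict (Icc vl vh)),
        μ ≤ ∫ v₂ in Icc vl vh, (if v₂ ≤ q ∨ α * φ v₂ ≤ φ v₁ then (1:ℝ) else 0) * f v₂) ∧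
     (∀ᵐ v₂ ∂(volume.restrict (Icc vl vh)),
        μ ≤ ∫ v₁ in Icc vl vh, (if v₁ ≤ q ∨ α * φ v₁ ≤ φ v₂ then (1:ℝ) else 0) * f v₁)) ∧
    ∀ h₁ h₂ : ℝ → ℝ → ℝ,
      Measurable (fun p : ℝ × ℝ => h₁ p.1 p.2) →
      Measurable (fun p : ℝ × ℝ => h₂ p.1 p.2) →
      (∀ v₁ ∈ Icc vl vh, ∀ v₂ ∈ Icc vl vh, h₁ v₁ v₂ ∈ Icc (0:ℝ) 1) →
      (∀ v₁ ∈ Icc vl vh, ∀ v₂ ∈ Icc vl vh, h₂ v₁ v₂ ∈ Icc (0:ℝ) 1) →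
      (∀ᵐ v₁ ∂(volume.restrict (Icc vl vh)), μ ≤ ∫ v₂ in Icc vl vh, h₁ v₁ v₂ * f v₂) →
      (∀ᵐ v₂ ∂(volume.restrict (Icc vl vh)), μ ≤ ∫ v₁ in Icc vl vh, h₂ v₁ v₂ * f v₁) →
      ∫ v₁ in Icc vl vh, ∫ v₂ in Icc vl vh,
          ((φ v₁ - α * φ v₂) * h₁ v₁ v₂ + (φ v₂ - α * φ v₁) * h₂ v₁ v₂) * (f v₁ * f v₂) ≤
        ∫ v₁ in Icc vl vh, ∫ v₂ in Icc vl vh,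
          ((φ v₁ - α * φ v₂) * (if v₂ ≤ q ∨ α * φ v₂ ≤ φ v₁ then (1:ℝ) else 0)
            + (φ v₂ - α * φ v₁) * (if v₁ ≤ q ∨ α * φ v₁ ≤ φ v₂ then (1:ℝ) else 0))
            * (f v₁ * f v₂) := by
  classical
  have hI : MeasurableSet (Icc vl vh) := measurableSet_Icc
  set ψ : ℝ → ℝ := fun v => φ (max vl (min v vh)) with hψdef
  have hclampmem : ∀ v, max vl (min v vh) ∈ Icc vl vh :=
    fun v => ⟨le_max_left _ _, max_le hle (min_le_right _ _)⟩
  have hψmono : Monotone ψ := fun a b hab =>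
    hφ_mono (hclampmem a) (hclampmem b) (max_le_max le_rfl (min_le_min_right _ hab))
  have hψeq : ∀ v ∈ Icc vl vh, φ v = ψ v := by
    intro v hv
    simp only [hψdef]
    rw [min_eq_left hv.2, max_eq_right hv.1]
  have hψmeas : Measurable ψ := hψmono.measurable
  have hfint : Integrable f := by
    by_contra hc
    rw [integral_undef hc] at hf_prob
    norm_num at hf_prob
  have hfI : IntegrableOn f (Icc vl vh) := hfint.integrableOn
  have hmuI : ∫ v in Icc vl vh ∩ Iic q, f v = μ := by
    have hind : (Icc vl vh).indicator f = f := Set.indicator_eq_self.mpr hf_supp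
    calc ∫ v in Icc vl vh ∩ Iic q, f v = ∫ v in Iic q ∩ Icc vl vh, f v := by rw [inter_comm]
      _ = ∫ v in Iic q, (Icc vl vh).indicator f v := (setIntegral_indicator hI).symm
      _ = ∫ v in Iic q, f v := by rw [hind]
      _ = μ := hq
  have hobψ : ∀ c : ℝ, μ ≤ ∫ v in Icc vl vh, (if v ≤ q ∨ α * ψ v ≤ c then (1:ℝ) else 0) * f v :=
    fun c => obed vl vh q α μ c f ψ hf_meas hf_nonneg hfI hψmeas hmuI
  constructor
  · constructor
    · filter_upwards with v₁
      have := hobψ (φ v₁)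
      rwa [setIntegral_congr_fun hI
        (g := fun v => (if v ≤ q ∨ α * φ v ≤ φ v₁ then (1:ℝ) else 0) * f v)
        (fun v hv => by simp only [← hψeq v hv])] at this
    · filter_upwards with v₂
      have := hobψ (φ v₂)
      rwa [setIntegral_congr_fun hI
        (g := fun v => (if v ≤ q ∨ α * φ v ≤ φ v₂ then (1:ℝ) else 0) * f v)
        (fun v hv => by simp only [← hψeq v hv])] at this
  · intro h₁ h₂ mh₁ mh₂ b₁ b₂ con₁ con₂
    set ρ : Measure ℝ := volume.restrict (Icc vl vh) with hρdef
    set A : ℝ := |φ vl| + |φ vh| with hAdef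
    set C : ℝ := (1 + α) * A with hCdef
    have hψb : ∀ v, |ψ v| ≤ A := by
      intro v
      have h1 : φ vl ≤ ψ v := hφ_mono ⟨le_rfl, hle⟩ (hclampmem v) (le_max_left _ _)
      have h2 : ψ v ≤ φ vh := hφ_mono (hclampmem v) ⟨hle, le_rfl⟩
        (max_le hle (min_le_right _ _))
      rw [abs_le]
      constructor
      · nlinarith [neg_abs_le (φ vl), abs_nonneg (φ vh)]
      · nlinarith [le_abs_self (φ vh), abs_nonneg (φ vl)]
    have hcoef : ∀ x y : ℝ, |ψ x - α * ψ y| ≤ C := by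
      intro x y
      calc |ψ x - α * ψ y| ≤ |ψ x| + |α * ψ y| := habs_sub _ _
        _ ≤ C := by
          rw [abs_mul, abs_of_pos hα, hCdef]
          nlinarith [hψb x, hψb y, abs_nonneg (ψ x), abs_nonneg (ψ y)]
    have hC0 : 0 ≤ C := le_trans (abs_nonneg _) (hcoef 0 0)
    have hprod_ae : ∀ᵐ p : ℝ × ℝ ∂(ρ.prod ρ), p ∈ (Icc vl vh ×ˢ Icc vl vh) := by
      rw [hρdef, Measure.prod_restrict]
      exact ae_restrict_mem (hI.prod hI)
    have IP : ∀ w : ℝ × ℝ → ℝ, Measurable w →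
        (∀ p : ℝ × ℝ, p.1 ∈ Icc vl vh → p.2 ∈ Icc vl vh → |w p| ≤ C) →
        Integrable (fun p : ℝ × ℝ => w p * (f p.1 * f p.2)) (ρ.prod ρ) := by
      intro w hw hwb
      refine ((hfI.mul_prod hfI).const_mul C).mono'
        (hw.mul ((hf_meas.comp measurable_fst).mul (hf_meas.comp measurable_snd))).aestronglyMeasurable ?_
      filter_upwards [hprod_ae] with p hp
      rw [Real.norm_eq_abs, abs_mul, abs_of_nonneg (mul_nonneg (hf_nonneg p.1) (hf_nonneg p.2))]
      exact mul_le_mul_of_nonneg_right (hwb p hp.1 hp.2)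
        (mul_nonneg (hf_nonneg p.1) (hf_nonneg p.2))
    -- integrabilities
    have IG₁ : Integrable (fun p : ℝ × ℝ =>
        (ψ p.1 - α * ψ p.2) * h₁ p.1 p.2 * (f p.1 * f p.2)) (ρ.prod ρ) := by
      refine IP (fun p => (ψ p.1 - α * ψ p.2) * h₁ p.1 p.2)
        (((hψmeas.comp measurable_fst).sub
          (measurable_const.mul (hψmeas.comp measurable_snd))).mul mh₁) ?_
      intro p hp1 hp2
      rw [abs_mul]
      have h01 := b₁ p.1 hp1 p.2 hp2
      have hk : |h₁ p.1 p.2| ≤ 1 := abs_le.2 ⟨by linarith [h01.1], h01.2⟩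
      nlinarith [hcoef p.1 p.2, abs_nonneg (ψ p.1 - α * ψ p.2), abs_nonneg (h₁ p.1 p.2)]
    have IG₂ : Integrable (fun p : ℝ × ℝ =>
        (ψ p.2 - α * ψ p.1) * h₂ p.1 p.2 * (f p.1 * f p.2)) (ρ.prod ρ) := by
      refine IP (fun p => (ψ p.2 - α * ψ p.1) * h₂ p.1 p.2)
        (((hψmeas.comp measurable_snd).sub
          (measurable_const.mul (hψmeas.comp measurable_fst))).mul mh₂) ?_
      intro p hp1 hp2
      rw [abs_mul]
      have h01 := b₂ p.1 hp1 p.2 hp2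
      have hk : |h₂ p.1 p.2| ≤ 1 := abs_le.2 ⟨by linarith [h01.1], h01.2⟩
      nlinarith [hcoef p.2 p.1, abs_nonneg (ψ p.2 - α * ψ p.1), abs_nonneg (h₂ p.1 p.2)]
    have IK2 : Integrable (fun p : ℝ × ℝ =>
        (ψ p.1 - α * ψ p.2) * h₂ p.2 p.1 * (f p.1 * f p.2)) (ρ.prod ρ) := by
      refine IP (fun p => (ψ p.1 - α * ψ p.2) * h₂ p.2 p.1)
        (((hψmeas.comp measurable_fst).sub
          (measurable_const.mul (hψmeas.comp measurable_snd))).mul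
          (mh₂.comp measurable_swap)) ?_
      intro p hp1 hp2
      rw [abs_mul]
      have h01 := b₂ p.2 hp2 p.1 hp1
      have hk : |h₂ p.2 p.1| ≤ 1 := abs_le.2 ⟨by linarith [h01.1], h01.2⟩
      nlinarith [hcoef p.1 p.2, abs_nonneg (ψ p.1 - α * ψ p.2), abs_nonneg (h₂ p.2 p.1)]
    have mstar : Measurable (fun p : ℝ × ℝ =>
        if p.2 ≤ q ∨ α * ψ p.2 ≤ ψ p.1 then (1:ℝ) else 0) :=
      Measurable.ite ((measurableSet_le measurable_snd measurable_const).union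
        (measurableSet_le (measurable_const.mul (hψmeas.comp measurable_snd))
          (hψmeas.comp measurable_fst))) measurable_const measurable_const
    have IS₁ : Integrable (fun p : ℝ × ℝ =>
        (ψ p.1 - α * ψ p.2) * (if p.2 ≤ q ∨ α * ψ p.2 ≤ ψ p.1 then (1:ℝ) else 0)
          * (f p.1 * f p.2)) (ρ.prod ρ) := by
      refine IP _ (((hψmeas.comp measurable_fst).sub
        (measurable_const.mul (hψmeas.comp measurable_snd))).mul mstar) ?_
      intro p _ _
      rw [abs_mul]
      have hk : |if p.2 ≤ q ∨ α * ψ p.2 ≤ ψ p.1 then (1:ℝ) else 0| ≤ 1 := by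
        split <;> norm_num
      nlinarith [hcoef p.1 p.2, abs_nonneg (ψ p.1 - α * ψ p.2),
        abs_nonneg (if p.2 ≤ q ∨ α * ψ p.2 ≤ ψ p.1 then (1:ℝ) else 0)]
    have mstar2 : Measurable (fun p : ℝ × ℝ =>
        if p.1 ≤ q ∨ α * ψ p.1 ≤ ψ p.2 then (1:ℝ) else 0) :=
      Measurable.ite ((measurableSet_le measurable_fst measurable_const).union
        (measurableSet_le (measurable_const.mul (hψmeas.comp measurable_fst))
          (hψmeas.comp measurable_snd))) measurable_const measurable_const
    have IS₂ : Integrable (fun p : ℝ × ℝ =>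
        (ψ p.2 - α * ψ p.1) * (if p.1 ≤ q ∨ α * ψ p.1 ≤ ψ p.2 then (1:ℝ) else 0)
          * (f p.1 * f p.2)) (ρ.prod ρ) := by
      refine IP _ (((hψmeas.comp measurable_snd).sub
        (measurable_const.mul (hψmeas.comp measurable_fst))).mul mstar2) ?_
      intro p _ _
      rw [abs_mul]
      have hk : |if p.1 ≤ q ∨ α * ψ p.1 ≤ ψ p.2 then (1:ℝ) else 0| ≤ 1 := by
        split <;> norm_num
      nlinarith [hcoef p.2 p.1, abs_nonneg (ψ p.2 - α * ψ p.1),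
        abs_nonneg (if p.1 ≤ q ∨ α * ψ p.1 ≤ ψ p.2 then (1:ℝ) else 0)]
    -- the key one-sided bound
    have keyK : ∀ k : ℝ → ℝ → ℝ, Measurable (fun p : ℝ × ℝ => k p.1 p.2) →
        (∀ x ∈ Icc vl vh, ∀ y ∈ Icc vl vh, k x y ∈ Icc (0:ℝ) 1) →
        (∀ᵐ x ∂ρ, μ ≤ ∫ y in Icc vl vh, k x y * f y) →
        Integrable (fun p : ℝ × ℝ =>
          (ψ p.1 - α * ψ p.2) * k p.1 p.2 * (f p.1 * f p.2)) (ρ.prod ρ) →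
        ∫ p : ℝ × ℝ, (ψ p.1 - α * ψ p.2) * k p.1 p.2 * (f p.1 * f p.2) ∂(ρ.prod ρ) ≤
          ∫ p : ℝ × ℝ, (ψ p.1 - α * ψ p.2)
            * (if p.2 ≤ q ∨ α * ψ p.2 ≤ ψ p.1 then (1:ℝ) else 0)
            * (f p.1 * f p.2) ∂(ρ.prod ρ) := by
      intro k hk hk01 hkcon Ik
      rw [integral_prod _ Ik, integral_prod _ IS₁]
      refine integral_mono_ae Ik.integral_prod_left IS₁.integral_prod_left ?_
      filter_upwards [hkcon, ae_restrict_mem hI] with x hx hxI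
      have pull : ∀ w : ℝ → ℝ,
          (∫ y in Icc vl vh, (ψ x - α * ψ y) * w y * (f x * f y)) =
            f x * ∫ y in Icc vl vh, (ψ x - α * ψ y) * w y * f y := by
        intro w
        rw [← integral_const_mul]
        exact integral_congr_ae (ae_of_all _ fun y => by ring)
      show (∫ y in Icc vl vh, (ψ x - α * ψ y) * k x y * (f x * f y)) ≤
        ∫ y in Icc vl vh, (ψ x - α * ψ y)
          * (if y ≤ q ∨ α * ψ y ≤ ψ x then (1:ℝ) else 0) * (f x * f y)
      rw [pull (fun y => k x y), pull (fun y => if y ≤ q ∨ α * ψ y ≤ ψ x then (1:ℝ) else 0)]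
      refine mul_le_mul_of_nonneg_left ?_ (hf_nonneg x)
      exact lemA vl vh q hq_mem f hf_meas hf_nonneg hfI ψ hψmono α μ (ψ x) hα hmuI
        (fun y => k x y) (hk.comp measurable_prodMk_left)
        (fun y hy => hk01 x hxI y hy) hx
    -- rewrite goal from φ to ψ
    have eL : (∫ v₁ in Icc vl vh, ∫ v₂ in Icc vl vh,
          ((φ v₁ - α * φ v₂) * h₁ v₁ v₂ + (φ v₂ - α * φ v₁) * h₂ v₁ v₂) * (f v₁ * f v₂)) =
        ∫ v₁ in Icc vl vh, ∫ v₂ in Icc vl vh,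
          ((ψ v₁ - α * ψ v₂) * h₁ v₁ v₂ + (ψ v₂ - α * ψ v₁) * h₂ v₁ v₂) * (f v₁ * f v₂) :=
      setIntegral_congr_fun hI (fun x hx => setIntegral_congr_fun hI
        (fun y hy => by rw [hψeq x hx, hψeq y hy]))
    have eR : (∫ v₁ in Icc vl vh, ∫ v₂ in Icc vl vh,
          ((φ v₁ - α * φ v₂) * (if v₂ ≤ q ∨ α * φ v₂ ≤ φ v₁ then (1:ℝ) else 0)
            + (φ v₂ - α * φ v₁) * (if v₁ ≤ q ∨ α * φ v₁ ≤ φ v₂ then (1:ℝ) else 0))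
            * (f v₁ * f v₂)) =
        ∫ v₁ in Icc vl vh, ∫ v₂ in Icc vl vh,
          ((ψ v₁ - α * ψ v₂) * (if v₂ ≤ q ∨ α * ψ v₂ ≤ ψ v₁ then (1:ℝ) else 0)
            + (ψ v₂ - α * ψ v₁) * (if v₁ ≤ q ∨ α * ψ v₁ ≤ ψ v₂ then (1:ℝ) else 0))
            * (f v₁ * f v₂) :=
      setIntegral_congr_fun hI (fun x hx => setIntegral_congr_fun hI
        (fun y hy => by rw [hψeq x hx, hψeq y hy]))
    rw [eL, eR]
    -- iterated to product
    have eLHS : (∫ v₁ in Icc vl vh, ∫ v₂ in Icc vl vh,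
          ((ψ v₁ - α * ψ v₂) * h₁ v₁ v₂ + (ψ v₂ - α * ψ v₁) * h₂ v₁ v₂) * (f v₁ * f v₂)) =
        (∫ p : ℝ × ℝ, (ψ p.1 - α * ψ p.2) * h₁ p.1 p.2 * (f p.1 * f p.2) ∂(ρ.prod ρ)) +
        (∫ p : ℝ × ℝ, (ψ p.2 - α * ψ p.1) * h₂ p.1 p.2 * (f p.1 * f p.2) ∂(ρ.prod ρ)) := by
      have step1 : (∫ v₁ in Icc vl vh, ∫ v₂ in Icc vl vh,
            ((ψ v₁ - α * ψ v₂) * h₁ v₁ v₂ + (ψ v₂ - α * ψ v₁) * h₂ v₁ v₂) * (f v₁ * f v₂)) =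
          ∫ v₁ in Icc vl vh, ∫ v₂ in Icc vl vh,
            ((ψ v₁ - α * ψ v₂) * h₁ v₁ v₂ * (f v₁ * f v₂)
              + (ψ v₂ - α * ψ v₁) * h₂ v₁ v₂ * (f v₁ * f v₂)) :=
        setIntegral_congr_fun hI (fun x _ =>
          integral_congr_ae (ae_of_all _ fun y => by ring))
      have step2 : (∫ v₁ in Icc vl vh, ∫ v₂ in Icc vl vh,
            ((ψ v₁ - α * ψ v₂) * h₁ v₁ v₂ * (f v₁ * f v₂)
              + (ψ v₂ - α * ψ v₁) * h₂ v₁ v₂ * (f v₁ * f v₂))) =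
          ∫ p : ℝ × ℝ, ((ψ p.1 - α * ψ p.2) * h₁ p.1 p.2 * (f p.1 * f p.2)
            + (ψ p.2 - α * ψ p.1) * h₂ p.1 p.2 * (f p.1 * f p.2)) ∂(ρ.prod ρ) :=
        integral_integral (IG₁.add IG₂)
      rw [step1, step2, integral_add IG₁ IG₂]
    have eRHS : (∫ v₁ in Icc vl vh, ∫ v₂ in Icc vl vh,
          ((ψ v₁ - α * ψ v₂) * (if v₂ ≤ q ∨ α * ψ v₂ ≤ ψ v₁ then (1:ℝ) else 0)
            + (ψ v₂ - α * ψ v₁) * (if v₁ ≤ q ∨ α * ψ v₁ ≤ ψ v₂ then (1:ℝ) else 0))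
            * (f v₁ * f v₂)) =
        (∫ p : ℝ × ℝ, (ψ p.1 - α * ψ p.2)
            * (if p.2 ≤ q ∨ α * ψ p.2 ≤ ψ p.1 then (1:ℝ) else 0)
            * (f p.1 * f p.2) ∂(ρ.prod ρ)) +
        (∫ p : ℝ × ℝ, (ψ p.2 - α * ψ p.1)
            * (if p.1 ≤ q ∨ α * ψ p.1 ≤ ψ p.2 then (1:ℝ) else 0)
            * (f p.1 * f p.2) ∂(ρ.prod ρ)) := by
      have step1 : (∫ v₁ in Icc vl vh, ∫ v₂ in Icc vl vh,
            ((ψ v₁ - α * ψ v₂) * (if v₂ ≤ q ∨ α * ψ v₂ ≤ ψ v₁ then (1:ℝ) else 0)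
              + (ψ v₂ - α * ψ v₁) * (if v₁ ≤ q ∨ α * ψ v₁ ≤ ψ v₂ then (1:ℝ) else 0))
              * (f v₁ * f v₂)) =
          ∫ v₁ in Icc vl vh, ∫ v₂ in Icc vl vh,
            ((ψ v₁ - α * ψ v₂) * (if v₂ ≤ q ∨ α * ψ v₂ ≤ ψ v₁ then (1:ℝ) else 0)
                * (f v₁ * f v₂)
              + (ψ v₂ - α * ψ v₁) * (if v₁ ≤ q ∨ α * ψ v₁ ≤ ψ v₂ then (1:ℝ) else 0)
                * (f v₁ * f v₂)) :=
        setIntegral_congr_fun hI (fun x _ =>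
          integral_congr_ae (ae_of_all _ fun y => by ring))
      have step2 : (∫ v₁ in Icc vl vh, ∫ v₂ in Icc vl vh,
            ((ψ v₁ - α * ψ v₂) * (if v₂ ≤ q ∨ α * ψ v₂ ≤ ψ v₁ then (1:ℝ) else 0)
                * (f v₁ * f v₂)
              + (ψ v₂ - α * ψ v₁) * (if v₁ ≤ q ∨ α * ψ v₁ ≤ ψ v₂ then (1:ℝ) else 0)
                * (f v₁ * f v₂))) =
          ∫ p : ℝ × ℝ, ((ψ p.1 - α * ψ p.2)
              * (if p.2 ≤ q ∨ α * ψ p.2 ≤ ψ p.1 then (1:ℝ) else 0) * (f p.1 * f p.2)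
            + (ψ p.2 - α * ψ p.1)
              * (if p.1 ≤ q ∨ α * ψ p.1 ≤ ψ p.2 then (1:ℝ) else 0)
              * (f p.1 * f p.2)) ∂(ρ.prod ρ) :=
        integral_integral (IS₁.add IS₂)
      rw [step1, step2, integral_add IS₁ IS₂]
    rw [eLHS, eRHS]
    -- swap identities
    have swapG₂ : (∫ p : ℝ × ℝ, (ψ p.2 - α * ψ p.1) * h₂ p.1 p.2 * (f p.1 * f p.2) ∂(ρ.prod ρ)) =
        ∫ p : ℝ × ℝ, (ψ p.1 - α * ψ p.2) * h₂ p.2 p.1 * (f p.1 * f p.2) ∂(ρ.prod ρ) := by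
      rw [← integral_prod_swap
        (fun p : ℝ × ℝ => (ψ p.1 - α * ψ p.2) * h₂ p.2 p.1 * (f p.1 * f p.2))]
      refine integral_congr_ae (ae_of_all _ fun p => ?_)
      obtain ⟨a, b⟩ := p
      simp only [Prod.swap_prod_mk]
      ring
    have swapS₂ : (∫ p : ℝ × ℝ, (ψ p.2 - α * ψ p.1)
          * (if p.1 ≤ q ∨ α * ψ p.1 ≤ ψ p.2 then (1:ℝ) else 0)
          * (f p.1 * f p.2) ∂(ρ.prod ρ)) =
        ∫ p : ℝ × ℝ, (ψ p.1 - α * ψ p.2)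
          * (if p.2 ≤ q ∨ α * ψ p.2 ≤ ψ p.1 then (1:ℝ) else 0)
          * (f p.1 * f p.2) ∂(ρ.prod ρ) := by
      rw [← integral_prod_swap (fun p : ℝ × ℝ => (ψ p.1 - α * ψ p.2)
        * (if p.2 ≤ q ∨ α * ψ p.2 ≤ ψ p.1 then (1:ℝ) else 0) * (f p.1 * f p.2))]
      refine integral_congr_ae (ae_of_all _ fun p => ?_)
      obtain ⟨a, b⟩ := p
      simp only [Prod.swap_prod_mk]
      ring
    rw [swapG₂, swapS₂]
    have i1 := keyK h₁ mh₁ b₁ con₁ IG₁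
    have i2 := keyK (fun x y => h₂ y x) (mh₂.comp measurable_swap)
      (fun x hx y hy => b₂ y hy x hx) con₂ IK2
    linarith [i1, i2]
end

section
/- Let v̲ ≤ v̄ be reals, let π : [v̲, v̄] → ℝ be non-decreasing and integrable, and let K ∈ ℝ with K ≤ π(v̲). Define p⋆(v) = v·π(v) − v̲·K − ∫_{v̲}^{v} π(s) ds. Then (i) the pair (π, p⋆) is truthful (for all v, v': v·π(v) − p⋆(v) ≥ v·π(v') − p⋆(v')) and individually rational (for all v: v·π(v) − p⋆(v) ≥ v·K); and (ii) if p : [v̲, v̄] → ℝ is any payment rule such that (π, p) is truthful and individually rational, then p(v) ≤ p⋆(v) for every v ∈ [v̲, v̄]. -/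
/-!
Write `u v = v * π v - p v` for the buyer's utility. Truthfulness says exactly that `π s` is a
subgradient of `u` at `s`, i.e. `u t - u s ≥ (t - s) * π s`. Since `π` is monotone, the function
`v ↦ ∫ π` has the same property, which gives truthfulness of `p⋆`, and individual rationality of
`p⋆` reduces to `K ≤ π v̲`. Conversely, along a uniform partition of `[v̲, v]` into `n` pieces the
subgradient inequality bounds the increments of `∫ π - u` by those of `(v - v̲) / n * π`, so
`∫_{v̲}^{v} π ≤ u v - u v̲` in the limit; with `u v̲ ≥ v̲ * K` this is `p v ≤ p⋆ v`.
-/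

open MeasureTheory Set Filter

-- Telescoping over the uniform partition into `n` pieces bounds `F b - F a` by
-- `(b - a) * (f b - f a) / n`.
theorem le_of_forall_sub_le_mul_sub {F f : ℝ → ℝ} {a b : ℝ} (hab : a ≤ b)
    (hF : ∀ s ∈ Icc a b, ∀ t ∈ Icc a b, s ≤ t → F t - F s ≤ (t - s) * (f t - f s)) :
    F b ≤ F a := by
  have bound : ∀ n : ℕ, 0 < n → F b - F a ≤ (b - a) * (f b - f a) / n := by
    intro n hn
    have hn' : (0 : ℝ) < n := Nat.cast_pos.mpr hn
    set δ := (b - a) / n with hδ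
    have hδ_nonneg : 0 ≤ δ := div_nonneg (sub_nonneg.mpr hab) hn'.le
    have hb : a + n * δ = b := by rw [hδ]; field_simp; ring
    have mem : ∀ k ≤ n, a + k * δ ∈ Icc a b := fun k hk =>
      ⟨le_add_of_nonneg_right (by positivity), by
        nlinarith [mul_le_mul_of_nonneg_right (Nat.cast_le.mpr hk : (k : ℝ) ≤ n) hδ_nonneg]⟩
    have partial_sums : ∀ k ≤ n, F (a + k * δ) - F a ≤ δ * (f (a + k * δ) - f a) := by
      intro k
      induction k with
      | zero => simp
      | succ k ih =>
        intro hk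
        have step := hF _ (mem k (by omega)) _ (mem (k + 1) hk) (by push_cast; linarith)
        have ih := ih (by omega)
        push_cast at step ⊢
        linarith
    calc F b - F a ≤ δ * (f b - f a) := hb ▸ partial_sums n le_rfl
      _ = (b - a) * (f b - f a) / n := by rw [hδ]; ring
  have hlim : Tendsto (fun n : ℕ => (b - a) * (f b - f a) / n) atTop (nhds 0) :=
    tendsto_const_div_atTop_nhds_zero_nat _
  have := ge_of_tendsto hlim (eventually_atTop.2 ⟨1, bound⟩)
  linarith

namespace MonotoneOn

variable {f : ℝ → ℝ} {a b x y : ℝ}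

theorem sub_mul_le_integral (hf : MonotoneOn f (Icc a b)) (hx : x ∈ Icc a b)
    (hy : y ∈ Icc a b) : (y - x) * f x ≤ ∫ t in x..y, f t := by
  have hint : ∀ {c d}, c ∈ Icc a b → d ∈ Icc a b → IntervalIntegrable f volume c d :=
    fun hc hd => (hf.mono (uIcc_subset_Icc hc hd)).intervalIntegrable
  rcases le_total x y with hxy | hyx
  · have := intervalIntegral.integral_mono_on hxy intervalIntegrable_const (hint hx hy)
      fun t ht => hf hx ⟨hx.1.trans ht.1, ht.2.trans hy.2⟩ ht.1
    simpa using this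
  · have := intervalIntegral.integral_mono_on hyx (hint hy hx) intervalIntegrable_const
      fun t ht => hf ⟨hy.1.trans ht.1, ht.2.trans hx.2⟩ hx ht.2
    rw [intervalIntegral.integral_symm]
    simp only [intervalIntegral.integral_const, smul_eq_mul] at this
    linarith

theorem integral_sub_integral (hf : MonotoneOn f (Icc a b)) (hx : x ∈ Icc a b)
    (hy : y ∈ Icc a b) : (∫ t in a..y, f t) - ∫ t in a..x, f t = ∫ t in x..y, f t := by
  have ha : a ∈ Icc a b := ⟨le_rfl, hx.1.trans hx.2⟩
  exact intervalIntegral.integral_interval_sub_left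
    (hf.mono (uIcc_subset_Icc ha hy)).intervalIntegrable
    (hf.mono (uIcc_subset_Icc ha hx)).intervalIntegrable

theorem integral_le_sub_of_subgradient {u : ℝ → ℝ} (hf : MonotoneOn f (Icc a b)) (hab : a ≤ b)
    (hu : ∀ s ∈ Icc a b, ∀ t ∈ Icc a b, s ≤ t → u s + (t - s) * f s ≤ u t) :
    ∫ t in a..b, f t ≤ u b - u a := by
  have hdecr := le_of_forall_sub_le_mul_sub (F := fun x => (∫ t in a..x, f t) - u x) (f := f) hab
    fun s hs t ht hst => by
      have hupper := hf.sub_mul_le_integral ht hs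
      rw [intervalIntegral.integral_symm] at hupper
      have := hu s hs t ht hst
      have := hf.integral_sub_integral hs ht
      linarith
  simp only [intervalIntegral.integral_same] at hdecr
  linarith

end MonotoneOn

theorem stmt_13_general
    (vl vh : ℝ) (π : ℝ → ℝ)
    (hπ_mono : MonotoneOn π (Icc vl vh))
    (K : ℝ) (hK : K ≤ π vl) :
    (∀ v ∈ Icc vl vh, ∀ v' ∈ Icc vl vh,
      v * π v' - (v' * π v' - vl * K - ∫ s in vl..v', π s) ≤
        v * π v - (v * π v - vl * K - ∫ s in vl..v, π s)) ∧
    (∀ v ∈ Icc vl vh,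
      v * K ≤ v * π v - (v * π v - vl * K - ∫ s in vl..v, π s)) ∧
    (∀ p : ℝ → ℝ,
      (∀ v ∈ Icc vl vh, ∀ v' ∈ Icc vl vh, v * π v' - p v' ≤ v * π v - p v) →
      (∀ v ∈ Icc vl vh, v * K ≤ v * π v - p v) →
      ∀ v ∈ Icc vl vh, p v ≤ v * π v - vl * K - ∫ s in vl..v, π s) := by
  refine ⟨fun v hv v' hv' => ?_, fun v hv => ?_, fun p htruth hIR v hv => ?_⟩
  · have := hπ_mono.sub_mul_le_integral hv' hv
    have := hπ_mono.integral_sub_integral hv' hv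
    linarith
  · have hrent := hπ_mono.sub_mul_le_integral (left_mem_Icc.2 (hv.1.trans hv.2)) hv
    have := mul_le_mul_of_nonneg_left hK (sub_nonneg.mpr hv.1)
    linarith
  · have hrent := (hπ_mono.mono (Icc_subset_Icc_right hv.2)).integral_le_sub_of_subgradient hv.1
      (u := fun t => t * π t - p t) fun s hs t ht _ => by
        have := htruth t ⟨ht.1, ht.2.trans hv.2⟩ s ⟨hs.1, hs.2.trans hv.2⟩
        linarith
    have := hIR vl (left_mem_Icc.2 (hv.1.trans hv.2))
    linarith

/-- Revenue-maximal implementation: the payment rule `p⋆` obtained by making the lowest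
type's participation constraint bind is truthful and individually rational, and pointwise
dominates every payment rule that implements `π` truthfully and individually rationally. -/
theorem stmt_13
    (vl vh : ℝ) (hle : vl ≤ vh) (π : ℝ → ℝ)
    (hπ_mono : MonotoneOn π (Icc vl vh)) (hπ_int : IntegrableOn π (Icc vl vh))
    (K : ℝ) (hK : K ≤ π vl) :
    (∀ v ∈ Icc vl vh, ∀ v' ∈ Icc vl vh,
      v * π v' - (v' * π v' - vl * K - ∫ s in vl..v', π s) ≤
        v * π v - (v * π v - vl * K - ∫ s in vl..v, π s)) ∧
    (∀ v ∈ Icc vl vh,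
      v * K ≤ v * π v - (v * π v - vl * K - ∫ s in vl..v, π s)) ∧
    (∀ p : ℝ → ℝ,
      (∀ v ∈ Icc vl vh, ∀ v' ∈ Icc vl vh, v * π v' - p v' ≤ v * π v - p v) →
      (∀ v ∈ Icc vl vh, v * K ≤ v * π v - p v) →
      ∀ v ∈ Icc vl vh, p v ≤ v * π v - vl * K - ∫ s in vl..v, π s) :=
  stmt_13_general vl vh π hπ_mono K hK
end
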